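/- arXiv:1708.08864 — 10 statements merged into one kernel-verified Lean document; each statement's English description precedes it below -/
import Mathlib

section
/- Every admissible path in a simple graph is an induced path; that is, if π: i = i_0, i_1, …, i_r = j (with i < j) is an admissible path in a simple graph G on vertex set {1,…,n}, then for all indices k, ℓ with |k − ℓ| ≥ 2, the pair {i_k, i_ℓ} is not an edge of G. -/
/-- A list of vertices forms a path in `G`: consecutive vertices are adjacent
and all vertices are distinct. -/
def IsPathList {V : Type*} (G : SimpleGraph V) (l : List V) : Prop :=
  l.Chain' G.Adj ∧ l.Nodup

/-- A list of vertices is an *admissible path* in a graph `G` on `{1,…,n}`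
(modeled as `Fin n`): it is a path from `i` to `j` with `i < j`, every
interior vertex is `< i` or `> j`, and no proper (ordered) subset of the
interior vertices together with `i` and `j` forms a path in `G`. -/
def IsAdmissible {n : ℕ} (G : SimpleGraph (Fin n)) (l : List (Fin n)) : Prop :=
  ∃ i j : Fin n, i < j ∧ l.head? = some i ∧ l.getLast? = some j ∧
    IsPathList G l ∧
    (∀ v ∈ l.tail.dropLast, v < i ∨ j < v) ∧
    (∀ l' : List (Fin n), l'.Sublist l.tail.dropLast → l' ≠ l.tail.dropLast →
      ¬ IsPathList G (i :: (l' ++ [j])))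


/-- Decomposition of a list of length at least 2 with given head and last. -/
lemma list_decomp {α : Type*} : ∀ (s : List α) (i j : α), 2 ≤ s.length →
    s.head? = some i → s.getLast? = some j → s = i :: (s.tail.dropLast ++ [j])
  | a :: b :: t, i, j, _, hh, hlst => by
    have hi : i = a := by simpa using hh.symm
    have hne : b :: t ≠ [] := by simp
    have hj : j = (b :: t).getLast hne := by
      have : (a :: b :: t).getLast? = some ((a :: b :: t).getLast (by simp)) :=
        List.getLast?_eq_getLast _
      rw [this] at hlst
      have := (Option.some_inj.mp hlst).symm
      rw [this, List.getLast_cons hne]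
    subst hi
    simp only [List.tail_cons, List.cons.injEq, true_and]
    rw [hj]
    exact (List.dropLast_concat_getLast hne).symm

lemma admissible_key {n : ℕ} (G : SimpleGraph (Fin n))
    (l : List (Fin n)) (hl : IsAdmissible G l)
    (k ℓ : ℕ) (hk : k < l.length) (hℓ : ℓ < l.length)
    (h : k + 2 ≤ ℓ) :
    ¬ G.Adj (l.get ⟨k, hk⟩) (l.get ⟨ℓ, hℓ⟩) := by
  obtain ⟨i, j, hij, hhead, hlast, ⟨hchain, hnd⟩, -, hmin⟩ := hl
  intro hadj
  set l₀ : List (Fin n) := l.take (k + 1) ++ l.drop ℓ with hl₀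
  -- l₀ is a sublist of l
  have hsub : l₀.Sublist l := by
    conv_rhs => rw [← List.take_append_drop (k + 1) l]
    exact (List.Sublist.refl _).append (List.drop_sublist_drop_left l (by omega))
  -- chain
  have hchain₀ : l₀.Chain' G.Adj := by
    refine List.IsChain.append (hchain.take _) (hchain.drop _) ?_
    intro x hx y hy
    have hx' : (l.take (k + 1)).getLast? = some (l.get ⟨k, hk⟩) := by
      rw [List.getLast?_eq_getElem?]
      have hlen : (l.take (k + 1)).length = k + 1 := by
        rw [List.length_take]; omega
      rw [hlen]
      simp only [Nat.add_sub_cancel]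
      rw [List.getElem?_take_of_lt (by omega)]
      simp [List.getElem?_eq_getElem hk]
    have hy' : (l.drop ℓ).head? = some (l.get ⟨ℓ, hℓ⟩) := by
      rw [List.head?_drop]
      simp [List.getElem?_eq_getElem hℓ]
    rw [hx'] at hx
    rw [hy'] at hy
    simp only [Option.mem_some_iff] at hx hy
    rw [← hx, ← hy]
    exact hadj
  have hnd₀ : l₀.Nodup := hsub.nodup hnd
  -- lengths
  have hlen₀ : l₀.length = (k + 1) + (l.length - ℓ) := by
    rw [hl₀, List.length_append, List.length_take, List.length_drop]
    omega
  -- head and last of l₀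
  have hhead₀ : l₀.head? = some i := by
    rw [hl₀, List.head?_append, List.head?_take, if_neg (by omega), hhead]
    rfl
  have hlast₀ : l₀.getLast? = some j := by
    rw [hl₀, List.getLast?_append, List.getLast?_drop]
    rw [if_neg (by omega), hlast]; rfl
  -- decompositions
  have hdl : l = i :: (l.tail.dropLast ++ [j]) :=
    list_decomp l i j (by omega) hhead hlast
  have hdl₀ : l₀ = i :: (l₀.tail.dropLast ++ [j]) :=
    list_decomp l₀ i j (by omega) hhead₀ hlast₀
  -- the shortcut interior is a proper sublist of the interior
  have hsub' : l₀.tail.dropLast.Sublist l.tail.dropLast := by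
    have := hsub
    rw [hdl, hdl₀] at this
    rw [List.cons_sublist_cons, List.append_sublist_append_right] at this
    exact this
  have hne' : l₀.tail.dropLast ≠ l.tail.dropLast := by
    intro heq
    have h1 : l₀.length = l₀.tail.dropLast.length + 2 := by
      conv_lhs => rw [hdl₀]
      simp
    have h2 : l.length = l.tail.dropLast.length + 2 := by
      conv_lhs => rw [hdl]
      simp
    rw [heq] at h1
    omega
  exact hmin _ hsub' hne' (by rw [← hdl₀]; exact ⟨hchain₀, hnd₀⟩)

/-- Every admissible path is an induced path: vertices at positions at
distance at least 2 in the path are non-adjacent in `G`. -/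
theorem admissible_path_is_induced {n : ℕ} (G : SimpleGraph (Fin n))
    (l : List (Fin n)) (hl : IsAdmissible G l)
    (k ℓ : ℕ) (hk : k < l.length) (hℓ : ℓ < l.length)
    (hkl : k + 2 ≤ ℓ ∨ ℓ + 2 ≤ k) :
    ¬ G.Adj (l.get ⟨k, hk⟩) (l.get ⟨ℓ, hℓ⟩) := by
  rcases hkl with h | h
  · exact admissible_key G l hl k ℓ hk hℓ h
  · exact fun hadj => admissible_key G l hl ℓ k hℓ hk h hadj.symm
end

section
/- Let T be a tree on the vertex set {1,…,n} such that the graph distance d(i, i+1) ≤ 2 for every i with 1 ≤ i < n. Then every admissible path in T has at most 3 vertices. -/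
/-- Build a walk from a chain list. -/
lemma exists_walk_of_chain {V : Type*} {G : SimpleGraph V} :
    ∀ (l : List V) (a b : V), l.Chain' G.Adj → l.head? = some a → l.getLast? = some b →
      ∃ w : G.Walk a b, w.support = l ∧
        w.edges = l.zipWith (fun x y => s(x, y)) l.tail
  | [], a, b, _, ha, _ => by simp at ha
  | [x], a, b, _, ha, hb => by
      simp only [List.head?_cons, Option.some.injEq] at ha
      simp only [List.getLast?_singleton, Option.some.injEq] at hb
      subst ha; subst hb
      exact ⟨SimpleGraph.Walk.nil, by simp, by simp⟩
  | x :: y :: rest, a, b, hc, ha, hb => by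
      simp only [List.head?_cons, Option.some.injEq] at ha
      subst ha
      obtain ⟨hadj, hc'⟩ := List.isChain_cons_cons.mp hc
      have hb' : (y :: rest).getLast? = some b := by
        rwa [List.getLast?_cons_cons] at hb
      obtain ⟨w, hw1, hw2⟩ := exists_walk_of_chain (y :: rest) y b hc' rfl hb'
      exact ⟨SimpleGraph.Walk.cons hadj w, by simp [hw1], by simp [hw2]⟩

/-- If `T` is a tree on `{1,…,n}` with `d(i, i+1) ≤ 2` for all `1 ≤ i < n`,
then every admissible path in `T` has at most 3 vertices. -/
theorem tree_dist_le_two_admissible_le_three {n : ℕ} (T : SimpleGraph (Fin n))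
    (hT : T.IsTree)
    (hd : ∀ i j : Fin n, (j : ℕ) = (i : ℕ) + 1 → T.dist i j ≤ 2) :
    ∀ l : List (Fin n), IsAdmissible T l → l.length ≤ 3 := by
  intro l hl
  by_contra hlen
  push_neg at hlen
  obtain ⟨i, j, hij, hhead, hlast, ⟨hchain, hnodup⟩, hint, _⟩ := hl
  -- l has at least 4 elements
  rcases l with _ | ⟨a, _ | ⟨b, _ | ⟨c, _ | ⟨e, rest⟩⟩⟩⟩ <;>
    simp only [List.length_nil, List.length_cons] at hlen <;> try omega
  -- head is i
  have ha : a = i := by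
    simp only [List.head?_cons, Option.some.injEq] at hhead; exact hhead
  subst ha
  -- b and c are interior vertices
  have hdrop : (b :: c :: e :: rest).dropLast = b :: c :: (e :: rest).dropLast := rfl
  have hbmem : b ∈ (a :: b :: c :: e :: rest).tail.dropLast := by
    rw [List.tail_cons, hdrop]; exact List.mem_cons_self
  have hcmem : c ∈ (a :: b :: c :: e :: rest).tail.dropLast := by
    rw [List.tail_cons, hdrop]; exact List.mem_cons_of_mem _ List.mem_cons_self
  have hb_out := hint b hbmem
  have hc_out := hint c hcmem
  -- adjacency b c
  obtain ⟨hab, hchain'⟩ := List.isChain_cons_cons.mp hchain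
  obtain ⟨hbc, _⟩ := List.isChain_cons_cons.mp hchain'
  -- build the walk
  obtain ⟨w, hw1, hw2⟩ := exists_walk_of_chain (a :: b :: c :: e :: rest) a j hchain hhead hlast
  have hwpath : w.IsPath := by rw [SimpleGraph.Walk.isPath_def, hw1]; exact hnodup
  have hedge : s(b, c) ∈ w.edges := by
    rw [hw2]; simp [List.zipWith]
  set T' := T.deleteEdges {s(b, c)} with hT'
  have hbc_not : s(b, c) ∉ T'.edgeSet := by
    rw [SimpleGraph.mem_edgeSet, hT', SimpleGraph.deleteEdges_adj]
    rintro ⟨-, h⟩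
    exact h rfl
  -- Claim A : i and j are not reachable in T'
  have hA : ¬ T'.Reachable a j := by
    rintro ⟨w'⟩
    have hp' := w'.toPath
    have hsub : ∀ e' ∈ (hp' : T'.Walk a j).edges, e' ∈ T.edgeSet := fun e' he' =>
      SimpleGraph.edgeSet_mono (SimpleGraph.deleteEdges_le _)
        (SimpleGraph.Walk.edges_subset_edgeSet _ he')
    have hp2 : ((hp' : T'.Walk a j).transfer T hsub).IsPath := hp'.2.transfer hsub
    have huniq := hT.IsAcyclic.path_unique ⟨w, hwpath⟩
      ⟨(hp' : T'.Walk a j).transfer T hsub, hp2⟩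
    have hedges : w.edges = (hp' : T'.Walk a j).edges := by
      have := congrArg (fun p : T.Path a j => (p : T.Walk a j).edges) huniq
      simpa [SimpleGraph.Walk.edges_transfer] using this
    rw [hedges] at hedge
    exact hbc_not (SimpleGraph.Walk.edges_subset_edgeSet _ hedge)
  -- Claim B : consecutive integers in [i,j] remain reachable in T'
  have hB : ∀ k k' : Fin n, a ≤ k → k' ≤ j → (k' : ℕ) = (k : ℕ) + 1 → T'.Reachable k k' := by
    intro k k' hik hk'j hsucc
    have hr : T.Reachable k k' := hT.isConnected.preconnected k k'
    obtain ⟨wk, hwk⟩ := hr.exists_walk_length_eq_dist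
    have hlen2 : wk.length ≤ 2 := hwk ▸ hd k k' hsucc
    have hkk' : k ≠ k' := by
      intro h; rw [h] at hsucc; omega
    have hbk : b ≠ k ∧ b ≠ k' := by
      rcases hb_out with h | h
      · constructor <;> intro hh <;> subst hh
        · exact absurd hik (not_le_of_gt h)
        · have : a ≤ b := le_trans hik (by rw [Fin.le_def]; omega)
          exact absurd this (not_le_of_gt h)
      · constructor <;> intro hh <;> subst hh
        · have : b ≤ j := le_trans (by rw [Fin.le_def]; omega) hk'j
          exact absurd this (not_le_of_gt h)
        · exact absurd hk'j (not_le_of_gt h)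
    have hck : c ≠ k ∧ c ≠ k' := by
      rcases hc_out with h | h
      · constructor <;> intro hh <;> subst hh
        · exact absurd hik (not_le_of_gt h)
        · have : a ≤ c := le_trans hik (by rw [Fin.le_def]; omega)
          exact absurd this (not_le_of_gt h)
      · constructor <;> intro hh <;> subst hh
        · have : c ≤ j := le_trans (by rw [Fin.le_def]; omega) hk'j
          exact absurd this (not_le_of_gt h)
        · exact absurd hk'j (not_le_of_gt h)
    have hne : ∀ e' ∈ wk.edges, e' ∉ ({s(b, c)} : Set (Sym2 (Fin n))) := by
      intro e' he'
      simp only [Set.mem_singleton_iff]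
      rintro rfl
      have hbsup := wk.fst_mem_support_of_mem_edges he'
      have hcsup := wk.snd_mem_support_of_mem_edges he'
      have hksup : k ∈ wk.support := SimpleGraph.Walk.start_mem_support _
      have hk'sup : k' ∈ wk.support := SimpleGraph.Walk.end_mem_support _
      have hcard : ({k, k', b, c} : Finset (Fin n)).card = 4 := by
        rw [Finset.card_insert_of_notMem (by simp [hkk', hbk.1.symm, hck.1.symm]),
            Finset.card_insert_of_notMem (by simp [hbk.2.symm, hck.2.symm]),
            Finset.card_insert_of_notMem (by simp [hbc.ne]),
            Finset.card_singleton]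
      have hsubset : ({k, k', b, c} : Finset (Fin n)) ⊆ wk.support.toFinset := by
        intro x hx
        simp only [Finset.mem_insert, Finset.mem_singleton] at hx
        rw [List.mem_toFinset]
        rcases hx with rfl | rfl | rfl | rfl
        exacts [hksup, hk'sup, hbsup, hcsup]
      have h1 : ({k, k', b, c} : Finset (Fin n)).card ≤ wk.support.toFinset.card :=
        Finset.card_le_card hsubset
      have h2 : wk.support.toFinset.card ≤ wk.support.length := List.toFinset_card_le _
      rw [SimpleGraph.Walk.length_support] at h2
      omega
    exact ⟨wk.toDeleteEdges _ hne⟩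
  -- Claim C : i reaches i + m in T' for all m with i + m ≤ j
  have hC : ∀ m : ℕ, ∀ hm : (a : ℕ) + m ≤ (j : ℕ),
      T'.Reachable a ⟨(a : ℕ) + m, lt_of_le_of_lt hm j.isLt⟩ := by
    intro m
    induction m with
    | zero =>
      intro hm
      have : (⟨(a : ℕ) + 0, lt_of_le_of_lt hm j.isLt⟩ : Fin n) = a := by
        apply Fin.ext; simp
      rw [this]
    | succ m ih =>
      intro hm
      have h1 : (a : ℕ) + m ≤ (j : ℕ) := by omega
      refine (ih h1).trans (hB _ _ ?_ ?_ ?_)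
      · rw [Fin.le_def]; simp
      · rw [Fin.le_def]; exact hm
      · simp; omega
  -- conclude
  have hij' : (a : ℕ) ≤ (j : ℕ) := le_of_lt (Fin.lt_def.mp hij)
  have hfinal := hC ((j : ℕ) - (a : ℕ)) (by omega)
  have heq : (⟨(a : ℕ) + ((j : ℕ) - (a : ℕ)),
      lt_of_le_of_lt (by omega : (a : ℕ) + ((j : ℕ) - (a : ℕ)) ≤ (j : ℕ)) j.isLt⟩ : Fin n) = j :=
    Fin.ext (by simp; omega)
  exact hA (heq ▸ hfinal)
end

section
/- Let C_n be the cycle on n ≥ 4 vertices and set m = n/2 + 1 if n is even and m = (n+1)/2 + 1 if n is odd. Then for every bijective labeling of the vertices of C_n by {1,…,n}, there exists an admissible path with at least m vertices. -/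
open SimpleGraph
open Fin.NatCast Fin.CommRing

lemma val_one_cyc {n : ℕ} (hn : 4 ≤ n) [NeZero n] : ((1 : Fin n) : ℕ) = 1 := by
  rw [Fin.val_one', Nat.mod_eq_of_lt (by omega)]

lemma cyc_adj_step {n : ℕ} (hn : 4 ≤ n) [NeZero n] (u σ : Fin n) (hσ : σ = 1 ∨ σ = -1) :
    (cycleGraph n).Adj u (u + σ) := by
  rw [cycleGraph_adj']
  rcases hσ with h | h <;> subst h
  · right; rw [show u + 1 - u = 1 by ring, val_one_cyc hn]
  · left; rw [show u - (u + -1) = 1 by ring, val_one_cyc hn]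

lemma cyc_adj_iff {n : ℕ} (hn : 4 ≤ n) [NeZero n] (u v : Fin n) :
    (cycleGraph n).Adj u v ↔ v = u + 1 ∨ v = u - 1 := by
  rw [cycleGraph_adj']
  constructor
  · rintro (h | h)
    · right
      have : u - v = 1 := by rw [Fin.ext_iff, h, val_one_cyc hn]
      rw [← this]; ring
    · left
      have : v - u = 1 := by rw [Fin.ext_iff, h, val_one_cyc hn]
      rw [← this]; ring
  · rintro (h | h) <;> subst h
    · right; rw [show u + 1 - u = 1 by ring, val_one_cyc hn]
    · left; rw [show u - (u - 1) = 1 by ring, val_one_cyc hn]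

lemma mapG_adj {n : ℕ} (e : Fin n ≃ Fin n) (a b : Fin n) :
    ((cycleGraph n).map e.toEmbedding).Adj a b ↔ (cycleGraph n).Adj (e.symm a) (e.symm b) := by
  rw [SimpleGraph.map_adj]
  constructor
  · rintro ⟨u, v, h, rfl, rfl⟩
    simpa using h
  · intro h
    exact ⟨e.symm a, e.symm b, h, by simp, by simp⟩

lemma range_map_succ_form {n : ℕ} [NeZero n] (e : Fin n ≃ Fin n) (s σ : Fin n) (m : ℕ) :
    (List.range (m + 1)).map (fun (k : ℕ) => e (s + σ * (k : Fin n)))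
      = e s :: (List.range m).map (fun (k : ℕ) => e (s + σ + σ * (k : Fin n))) := by
  rw [List.range_succ_eq_map, List.map_cons, List.map_map]
  congr 1
  · simp
  · apply List.map_congr_left
    intro k _
    simp only [Function.comp_apply, Nat.succ_eq_add_one]
    congr 1
    push_cast
    ring

lemma dir_lemma {n : ℕ} (hn : 4 ≤ n) [NeZero n] (e : Fin n ≃ Fin n) :
    ∀ (l : List (Fin n)) (s : Fin n),
      IsPathList ((cycleGraph n).map e.toEmbedding) l → l.head? = some (e s) →
      ∃ σ : Fin n, (σ = 1 ∨ σ = -1) ∧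
        l = (List.range l.length).map (fun (k : ℕ) => e (s + σ * (k : Fin n)))
  | [], s, _, hh => by simp at hh
  | [a], s, _, hh => by
    refine ⟨1, Or.inl rfl, ?_⟩
    simp only [List.head?_cons, Option.some.injEq] at hh
    simp [List.range_succ, hh]
  | a :: b :: t, s, hp, hh => by
    simp only [List.head?_cons, Option.some.injEq] at hh
    subst hh
    have hadj : ((cycleGraph n).map e.toEmbedding).Adj (e s) b :=
      (List.isChain_cons_cons.mp hp.1).1
    rw [mapG_adj, Equiv.symm_apply_apply, cyc_adj_iff hn] at hadj
    have hb : ∃ σ : Fin n, (σ = 1 ∨ σ = -1) ∧ b = e (s + σ) := by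
      rcases hadj with h | h
      · refine ⟨1, Or.inl rfl, ?_⟩
        have := congrArg e h
        simpa using this
      · refine ⟨-1, Or.inr rfl, ?_⟩
        have := congrArg e h
        rw [Equiv.apply_symm_apply] at this
        rw [this]
        congr 1
        ring
    obtain ⟨σ, hσ, hbe⟩ := hb
    have hp' : IsPathList ((cycleGraph n).map e.toEmbedding) (b :: t) :=
      ⟨(List.isChain_cons_cons.mp hp.1).2, hp.2.of_cons⟩
    obtain ⟨σ', hσ', hform⟩ := dir_lemma hn e (b :: t) (s + σ) hp' (by simp [hbe])
    by_cases hss : σ' = σ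
    · subst hss
      refine ⟨σ', hσ', ?_⟩
      simp only [List.length_cons]
      rw [show t.length + 1 + 1 = (t.length + 1) + 1 from rfl,
        range_map_succ_form]
      rw [List.length_cons] at hform
      rw [← hform]
    · -- opposite direction
      rcases t with _ | ⟨c, t'⟩
      · refine ⟨σ, hσ, ?_⟩
        simp only [List.length_cons, List.length_nil]
        rw [show 0 + 1 + 1 = 1 + 1 from rfl, range_map_succ_form]
        simp [List.range_succ, hbe]
      · exfalso
        -- c = e (s + σ + σ' * 1) and σ' = -σ so c = e s = a
        have hσσ' : σ' = -σ := by
          rcases hσ with h1 | h1 <;> rcases hσ' with h2 | h2 <;>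
            simp [h1, h2] at hss ⊢
        have hc : c = e (s + σ + σ' * ((1 : ℕ) : Fin n)) := by
          have h2 := congrArg (fun l => l[1]?) hform
          rw [List.getElem?_map, List.getElem?_range (by simp)] at h2
          simpa using h2
        rw [hσσ'] at hc
        have hc' : c = e s := by
          rw [hc]; congr 1; push_cast; ring
        have : e s ∉ b :: c :: t' := (List.nodup_cons.mp hp.2).1
        exact this (by simp [hc'])

lemma range_arc_decomp (d : ℕ) (hd : 2 ≤ d) :
    List.range (d + 1) = 0 :: (List.range' 1 (d-1) ++ [d]) := by
  rw [List.range_eq_range']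
  rw [show d + 1 = (d - 1 + 1) + 1 by omega, ← List.range'_append_1 (s := 0) (m := d - 1 + 1) (n := 1)]
  rw [show d - 1 + 1 = 1 + (d - 1) by omega, ← List.range'_append_1 (s := 0) (m := 1) (n := d-1)]
  simp [List.range'_one]
  omega

lemma natCast_fin_inj {n : ℕ} [NeZero n] {a b : ℕ} (ha : a < n) (hb : b < n)
    (h : (a : Fin n) = (b : Fin n)) : a = b := by
  have := congrArg Fin.val h
  rwa [Fin.val_natCast, Fin.val_natCast, Nat.mod_eq_of_lt ha, Nat.mod_eq_of_lt hb] at this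

lemma arc_admissible {n : ℕ} (hn : 4 ≤ n) [NeZero n] (e : Fin n ≃ Fin n) (i j : Fin n)
    (hij : i < j) (s : Fin n) (hs : e s = i) (d : ℕ) (hd2 : 2 ≤ d) (hdn : d ≤ n - 2)
    (hj : e (s + (d : Fin n)) = j)
    (hint : ∀ k : ℕ, 1 ≤ k → k ≤ d - 1 → e (s + (k : Fin n)) < i ∨ j < e (s + (k : Fin n))) :
    IsAdmissible ((cycleGraph n).map e.toEmbedding)
      ((List.range (d+1)).map (fun (k : ℕ) => e (s + (k : Fin n)))) := by
  set f : ℕ → Fin n := fun k => e (s + (k : Fin n)) with hf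
  set xs : List (Fin n) := (List.range' 1 (d-1)).map f with hxs
  set l : List (Fin n) := (List.range (d+1)).map f with hl
  have hdecomp : l = i :: (xs ++ [j]) := by
    rw [hl, range_arc_decomp d hd2, List.map_cons, List.map_append, List.map_singleton]
    congr 1
    · rw [hf]; simpa using hs
    · congr 1
      rw [hf]; simpa using hj
  have hxslen : xs.length = d - 1 := by simp [hxs]
  have htd : l.tail.dropLast = xs := by
    rw [hdecomp, List.tail_cons, List.dropLast_concat]
  have hinj : ∀ a ∈ List.range (d+1), ∀ b ∈ List.range (d+1), f a = f b → a = b := by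
    intro a ha b hb hab
    simp only [List.mem_range] at ha hb
    have := e.injective hab
    have := add_left_cancel this
    exact natCast_fin_inj (by omega) (by omega) this
  have hpath : IsPathList ((cycleGraph n).map e.toEmbedding) l := by
    constructor
    · unfold List.Chain'
      rw [hl, List.isChain_map, List.isChain_range_succ]
      intro k hk
      rw [mapG_adj]
      simp only [hf, Equiv.symm_apply_apply]
      have : s + ((k+1 : ℕ) : Fin n) = (s + (k : Fin n)) + 1 := by push_cast; ring
      rw [this]
      exact cyc_adj_step hn _ _ (Or.inl rfl)
    · exact List.nodup_range.map_on hinj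
  refine ⟨i, j, hij, ?_, ?_, hpath, ?_, ?_⟩
  · rw [hdecomp]; rfl
  · rw [hdecomp, ← List.cons_append, List.getLast?_concat]
  · rw [htd]
    intro v hv
    rw [hxs] at hv
    obtain ⟨k, hk, rfl⟩ := List.mem_map.mp hv
    rw [List.mem_range'_1] at hk
    exact hint k hk.1 (by omega)
  · rw [htd]
    intro l' hsub hne hbad
    have hlen' : l'.length ≤ d - 2 := by
      have h1 := hsub.length_le
      rcases Nat.lt_or_ge l'.length (d-1) with h | h
      · omega
      · exact absurd (hsub.eq_of_length (by omega)) hne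
    have hhead : (i :: (l' ++ [j])).head? = some (e s) := by rw [hs]; rfl
    obtain ⟨σ, hσ, hform⟩ := dir_lemma hn e _ s hbad hhead
    have hL : (i :: (l' ++ [j])).length = l'.length + 2 := by simp
    have hlast : j = e (s + σ * ((l'.length + 1 : ℕ) : Fin n)) := by
      have h2 := congrArg List.getLast? hform
      rw [hL] at h2
      rw [show l'.length + 2 = (l'.length + 1) + 1 from rfl, List.range_succ,
        List.map_append, List.map_singleton, List.getLast?_concat] at h2
      rw [← List.cons_append, List.getLast?_concat] at h2
      exact Option.some.inj h2
    rcases hσ with hσ1 | hσ1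
    · -- σ = 1 : same-direction arc, length forces equality
      rw [hσ1, one_mul] at hlast
      have : s + ((l'.length + 1 : ℕ) : Fin n) = s + (d : Fin n) := by
        apply e.injective; rw [← hlast, hj]
      have := natCast_fin_inj (a := l'.length + 1) (b := d) (by omega) (by omega)
        (add_left_cancel this)
      omega
    · -- σ = -1 : reverse arc
      rw [hσ1] at hlast
      have hcast : ((l'.length + 1 : ℕ) : Fin n) + (d : Fin n) = 0 := by
        have h3 : s + -1 * ((l'.length + 1 : ℕ) : Fin n) = s + (d : Fin n) := by
          apply e.injective; rw [← hlast, hj]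
        have := add_left_cancel h3
        linear_combination -this
      have hmod : (l'.length + 1 + d) % n = 0 := by
        have h6 : ((l'.length + 1 + d : ℕ) : Fin n) = 0 := by
          push_cast at hcast ⊢
          linear_combination hcast
        have := congrArg Fin.val h6
        rwa [Fin.val_natCast, Fin.val_zero] at this
      have hlen2 : l'.length + 1 + d = n := by
        have h1 : l'.length + 1 + d < 2 * n := by omega
        have h2 : 0 < l'.length + 1 + d := by omega
        rcases Nat.lt_or_ge (l'.length + 1 + d) n with h | h
        · rw [Nat.mod_eq_of_lt h] at hmod; omega
        · have : l'.length + 1 + d - n < n := by omega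
          have heq : (l'.length + 1 + d) % n = l'.length + 1 + d - n := by
            rw [Nat.mod_eq_sub_mod h, Nat.mod_eq_of_lt this]
          omega
      -- so l' is nonempty with head e (s - 1)
      have hl'ne : l' ≠ [] := by
        intro h; rw [h] at hlen2; simp at hlen2; omega
      obtain ⟨x, t, rfl⟩ := List.exists_cons_of_ne_nil hl'ne
      have hsecond : x = e (s + -1 * ((1:ℕ) : Fin n)) := by
        have h2 := congrArg (fun t => t[1]?) hform
        rw [List.getElem?_map, List.getElem?_range (by simp)] at h2
        rw [hσ1] at h2
        simpa using h2
      have hmem : e (s + -1 * ((1:ℕ) : Fin n)) ∈ xs := by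
        rw [← hsecond]
        exact hsub.mem (by simp)
      rw [hxs, List.mem_map] at hmem
      obtain ⟨k, hk, hke⟩ := hmem
      rw [List.mem_range'_1] at hk
      have : s + (k : Fin n) = s + -1 * ((1:ℕ) : Fin n) := e.injective hke
      have h4 := add_left_cancel this
      have h5 : ((k + 1 : ℕ) : Fin n) = ((0:ℕ) : Fin n) := by
        push_cast at h4 ⊢
        linear_combination h4
      have := congrArg Fin.val h5
      rw [Fin.val_natCast, Fin.val_natCast, Nat.zero_mod, Nat.mod_eq_of_lt (by omega)] at this
      omega

lemma negEquiv_symm_apply {n : ℕ} [NeZero n] (e : Fin n ≃ Fin n) (a : Fin n) :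
    ((Equiv.neg (Fin n)).trans e).symm a = -(e.symm a) := by
  simp [Equiv.symm_trans_apply]

lemma mapG_neg {n : ℕ} (hn : 4 ≤ n) [NeZero n] (e : Fin n ≃ Fin n) :
    (cycleGraph n).map ((Equiv.neg (Fin n)).trans e).toEmbedding
      = (cycleGraph n).map e.toEmbedding := by
  ext a b
  rw [mapG_adj, mapG_adj, negEquiv_symm_apply, negEquiv_symm_apply,
    cyc_adj_iff hn, cyc_adj_iff hn]
  constructor <;> rintro (h | h)
  · right; linear_combination -h
  · left; linear_combination -h
  · right; linear_combination -h
  · left; linear_combination -h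

lemma constant_dir {n : ℕ} (hn : 4 ≤ n) [NeZero n] (q : Fin n → Fin n)
    (hq : Function.Injective q)
    (h : ∀ a : Fin n, a.val + 1 < n → q (a+1) = q a + 1 ∨ q (a+1) = q a - 1) :
    ∃ σ : Fin n, (σ = 1 ∨ σ = -1) ∧ ∀ k : ℕ, k < n → q ((k : Fin n)) = q 0 + σ * (k : Fin n) := by
  have h0 : (0 : Fin n).val + 1 < n := by
    rw [Fin.val_zero]; omega
  have key := h 0 h0
  refine ⟨q (0+1) - q 0, ?_, ?_⟩
  · rcases key with hk | hk
    · left; rw [hk]; ring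
    · right; rw [hk]; ring
  · set σ := q (0+1) - q 0 with hσdef
    have hσ : σ = 1 ∨ σ = -1 := by
      rcases key with hk | hk
      · left; rw [hσdef, hk]; ring
      · right; rw [hσdef, hk]; ring
    intro k
    induction k using Nat.strong_induction_on with
    | _ k ih =>
      intro hk
      match k with
      | 0 => simp
      | 1 =>
        have : ((1:ℕ) : Fin n) = 0 + 1 := by simp
        rw [this, hσdef]; ring
      | (k+2) =>
        have hk1 : k + 1 < n := by omega
        have hcast : ((k+1 : ℕ) : Fin n).val = k + 1 := by
          rw [Fin.val_natCast, Nat.mod_eq_of_lt hk1]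
        have hstep := h ((k+1 : ℕ) : Fin n) (by rw [hcast]; omega)
        have hc2 : (((k+1 : ℕ) : Fin n) + 1) = ((k+2 : ℕ) : Fin n) := by push_cast; ring
        rw [hc2] at hstep
        have ihk1 := ih (k+1) (by omega) hk1
        rcases hσ with h1 | h1 <;> rcases hstep with h2 | h2
        · rw [h2, ihk1, h1]; push_cast; ring
        · -- direction flip: q (k+2) = q k, contradiction
          exfalso
          have ihk : q ((k : ℕ) : Fin n) = q 0 + σ * (k : Fin n) := ih k (by omega) (by omega)
          have : q ((k+2 : ℕ) : Fin n) = q ((k : ℕ) : Fin n) := by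
            rw [h2, ihk1, ihk, h1]; push_cast; ring
          have heq := hq this
          have := congrArg Fin.val heq
          rw [Fin.val_natCast, Fin.val_natCast, Nat.mod_eq_of_lt (by omega),
            Nat.mod_eq_of_lt (by omega)] at this
          omega
        · exfalso
          have ihk : q ((k : ℕ) : Fin n) = q 0 + σ * (k : Fin n) := ih k (by omega) (by omega)
          have : q ((k+2 : ℕ) : Fin n) = q ((k : ℕ) : Fin n) := by
            rw [h2, ihk1, ihk, h1]; push_cast; ring
          have heq := hq this
          have := congrArg Fin.val heq
          rw [Fin.val_natCast, Fin.val_natCast, Nat.mod_eq_of_lt (by omega),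
            Nat.mod_eq_of_lt (by omega)] at this
          omega
        · rw [h2, ihk1, h1]; push_cast; ring

lemma caseA_lemma {n : ℕ} (hn : 4 ≤ n) [NeZero n] (e : Fin n ≃ Fin n) (a jj : Fin n)
    (hij : a < jj) (hj2 : ∀ v : Fin n, v ≠ a → v ≠ jj → v < a ∨ jj < v)
    (d : ℕ) (hd2 : 2 ≤ d) (hdn : d ≤ n - 2)
    (hj : e (e.symm a + (d : Fin n)) = jj) :
    ∃ l, IsAdmissible ((cycleGraph n).map e.toEmbedding) l ∧ d + 1 ≤ l.length := by
  set s := e.symm a with hsdef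
  refine ⟨(List.range (d+1)).map (fun (k : ℕ) => e (s + (k : Fin n))), ?_, by simp⟩
  apply arc_admissible hn e a jj hij s (by simp [hsdef]) d hd2 hdn hj
  intro k hk1 hk2
  apply hj2
  · intro hc
    have : s + (k : Fin n) = s := by
      apply e.injective; rw [hc]; simp [hsdef]
    have h0 : (k : Fin n) = ((0:ℕ) : Fin n) := by
      push_cast; linear_combination this - (by ring : s + (k : Fin n) - (k : Fin n) = s)
    have := natCast_fin_inj (a := k) (b := 0) (by omega) (by omega) h0
    omega
  · intro hc
    have : s + (k : Fin n) = s + (d : Fin n) := by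
      apply e.injective; rw [hc, hj]
    have := natCast_fin_inj (a := k) (b := d) (by omega) (by omega) (add_left_cancel this)
    omega

lemma caseB_lemma {n : ℕ} (hn : 4 ≤ n) [NeZero n] (e : Fin n ≃ Fin n)
    (hconst : ∀ k : ℕ, k < n → e.symm ((k : Fin n)) = e.symm 0 + (-1) * (k : Fin n)) :
    ∃ l, IsAdmissible ((cycleGraph n).map e.toEmbedding) l ∧ (n+1)/2 + 1 ≤ l.length := by
  set d : ℕ := (n+1)/2 with hddef
  have hd2 : 2 ≤ d := by omega
  have hdn : d ≤ n - 2 := by omega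
  set s := e.symm 0 with hsdef
  -- key computation : e (s + (k:Fin n)) = ((n - k : ℕ) : Fin n) for 1 ≤ k ≤ n-1
  have hkey : ∀ k : ℕ, 1 ≤ k → k ≤ n - 1 → e (s + (k : Fin n)) = ((n - k : ℕ) : Fin n) := by
    intro k hk1 hk2
    have h1 := hconst (n - k) (by omega)
    have h2 : s + (k : Fin n) = e.symm (((n - k : ℕ)) : Fin n) := by
      rw [h1]
      have hz : ((n - k : ℕ) : Fin n) + (k : Fin n) = 0 := by
        have : ((n - k + k : ℕ) : Fin n) = ((n : ℕ) : Fin n) := by congr 1; omega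
        push_cast at this
        simpa using this
      linear_combination hz
    rw [h2, Equiv.apply_symm_apply]
  have hjval : (((n - d : ℕ)) : Fin n).val = n - d := by
    rw [Fin.val_natCast, Nat.mod_eq_of_lt (by omega)]
  refine ⟨(List.range (d+1)).map (fun (k : ℕ) => e (s + (k : Fin n))), ?_, by simp⟩
  apply arc_admissible hn e 0 (((n - d : ℕ)) : Fin n) ?_ s (by simp [hsdef]) d hd2 hdn
    (hkey d (by omega) (by omega))
  · intro k hk1 hk2
    right
    rw [hkey k (by omega) (by omega), Fin.lt_def, hjval, Fin.val_natCast,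
      Nat.mod_eq_of_lt (by omega)]
    omega
  · rw [Fin.lt_def, hjval, Fin.val_zero]
    omega

/-- In every labeling of the cycle `C_n` (`n ≥ 4`) by `{1,…,n}` there is an
admissible path with at least `m` vertices, where `m = n/2 + 1` if `n` is even
and `m = (n+1)/2 + 1` if `n` is odd. -/
theorem cycle_exists_long_admissible {n : ℕ} (hn : 4 ≤ n)
    (m : ℕ) (hm : m = if Even n then n / 2 + 1 else (n + 1) / 2 + 1) :
    ∀ e : Fin n ≃ Fin n, ∃ l : List (Fin n),
      IsAdmissible ((SimpleGraph.cycleGraph n).map e.toEmbedding) l ∧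
      m ≤ l.length := by
  intro e
  haveI : NeZero n := ⟨by omega⟩
  have hm' : m = (n+1)/2 + 1 := by
    rcases Nat.even_or_odd n with h | h
    · rw [hm, if_pos h]
      obtain ⟨k, rfl⟩ := h
      omega
    · rw [hm, if_neg (Nat.not_even_iff_odd.mpr h)]
  set q : Fin n → Fin n := (⇑e.symm) with hqdef
  by_cases hB : ∀ a : Fin n, a.val + 1 < n → q (a+1) = q a + 1 ∨ q (a+1) = q a - 1
  · -- case B : consecutive labels adjacent, cyclic order
    obtain ⟨σ, hσ, hconst⟩ := constant_dir hn q e.symm.injective hB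
    rcases hσ with h1 | h1
    · -- σ = 1 : use negated equiv
      set e' := (Equiv.neg (Fin n)).trans e with he'
      have hconst' : ∀ k : ℕ, k < n → e'.symm ((k : Fin n)) = e'.symm 0 + (-1) * (k : Fin n) := by
        intro k hk
        rw [negEquiv_symm_apply, negEquiv_symm_apply]
        have h := hconst k hk
        rw [h1] at h
        show -(q ((k : ℕ) : Fin n)) = -(q 0) + (-1) * ((k : ℕ) : Fin n)
        linear_combination -h
      obtain ⟨l, hl, hlen⟩ := caseB_lemma hn e' hconst'
      rw [mapG_neg hn] at hl
      exact ⟨l, hl, by omega⟩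
    · -- σ = -1 : direct
      have hconst' : ∀ k : ℕ, k < n → e.symm ((k : Fin n)) = e.symm 0 + (-1) * (k : Fin n) := by
        intro k hk
        have := hconst k hk
        rw [← hqdef, this, h1]
      obtain ⟨l, hl, hlen⟩ := caseB_lemma hn e hconst'
      exact ⟨l, hl, by omega⟩
  · -- case A : some pair of consecutive labels not adjacent
    push_neg at hB
    obtain ⟨a, ha, hne1, hne2⟩ := hB
    set jj := a + 1 with hjj
    have hjval : jj.val = a.val + 1 := by
      rw [hjj, Fin.val_add, val_one_cyc hn, Nat.mod_eq_of_lt (by omega)]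
    have hij : a < jj := by rw [Fin.lt_def, hjval]; omega
    have hj2 : ∀ v : Fin n, v ≠ a → v ≠ jj → v < a ∨ jj < v := by
      intro v hv1 hv2
      rw [Fin.lt_def, Fin.lt_def, hjval]
      rw [Ne, Fin.ext_iff] at hv1
      rw [Ne, Fin.ext_iff, hjval] at hv2
      omega
    set δ := q jj - q a with hδ
    have hδ0 : δ ≠ 0 := by
      intro h
      have : q jj = q a := by linear_combination h
      have := e.symm.injective this
      rw [Fin.ext_iff, hjval] at this
      omega
    have hδ1 : δ ≠ 1 := by
      intro h
      apply hne1
      rw [hδ] at h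
      linear_combination h
    have hδn1 : δ ≠ -1 := by
      intro h
      apply hne2
      rw [hδ] at h
      linear_combination h
    have hδval : 2 ≤ δ.val ∧ δ.val ≤ n - 2 := by
      constructor
      · rcases Nat.lt_or_ge δ.val 2 with h | h
        · interval_cases hv : δ.val
          · exact absurd (Fin.ext (by simp [hv])) hδ0
          · exfalso; apply hδ1; rw [Fin.ext_iff, hv, val_one_cyc hn]
        · exact h
      · rcases Nat.lt_or_ge δ.val (n-1) with h | h
        · omega
        · exfalso
          apply hδn1
          have hval : δ.val = n - 1 := by have := δ.isLt; omega
          have hδc : δ = ((n - 1 : ℕ) : Fin n) := by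
            rw [← Fin.cast_val_eq_self δ, hval]
          rw [hδc]
          have hz : ((n - 1 : ℕ) : Fin n) + 1 = 0 := by
            have : ((n - 1 + 1 : ℕ) : Fin n) = ((n : ℕ) : Fin n) := by congr 1; omega
            push_cast at this
            simpa using this
          linear_combination hz
    rcases Nat.lt_or_ge δ.val ((n+1)/2) with hs | hs
    · -- use negated equiv, d = n - δ.val
      set e' := (Equiv.neg (Fin n)).trans e with he'
      have hj : e' (e'.symm a + ((n - δ.val : ℕ) : Fin n)) = jj := by
        rw [negEquiv_symm_apply]
        have hc : ((n - δ.val : ℕ) : Fin n) = -δ := by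
          have : ((n - δ.val + δ.val : ℕ) : Fin n) = 0 := by
            rw [show n - δ.val + δ.val = n by omega]; simp
          push_cast at this
          linear_combination this
        rw [hc]
        have : -q a + -δ = -(q jj) := by rw [hδ]; ring
        rw [this, he']
        show e ((Equiv.neg (Fin n)) (-(q jj))) = jj
        simp [hqdef]
      obtain ⟨l, hl, hlen⟩ := caseA_lemma hn e' a jj hij hj2 (n - δ.val)
        (by omega) (by omega) hj
      rw [mapG_neg hn] at hl
      refine ⟨l, hl, by omega⟩
    · -- direct, d = δ.val
      have hj : e (e.symm a + ((δ.val : ℕ) : Fin n)) = jj := by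
        rw [Fin.cast_val_eq_self]
        have : e.symm a + δ = q jj := by rw [hδ, hqdef]; ring
        rw [this, hqdef]
        simp
      obtain ⟨l, hl, hlen⟩ := caseA_lemma hn e a jj hij hj2 δ.val
        (hδval.1) (hδval.2) hj
      refine ⟨l, hl, by omega⟩
end

section
/- Let C_n be the cycle on n ≥ 4 vertices and set m = n/2 + 1 if n is even and m = (n+1)/2 + 1 if n is odd. Then there exists a bijective labeling of the vertices of C_n by {1,…,n} such that every admissible path has at most m vertices. -/
set_option maxHeartbeats 1000000

open Fin.NatCast Fin.IntCast Fin.CommRing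

/-- Position of label `k` in our labeling of the cycle. -/

def cyclePos (n : ℕ) [NeZero n] (k : Fin n) : Fin n :=
  if n % 2 = 1 then
    if k.val % 2 = 0 then ((k.val / 2 : ℕ) : Fin n)
    else ((n / 2 + 1 + k.val / 2 : ℕ) : Fin n)
  else
    ((k.val / 2 * (n / 2 - 1) + (if k.val % 2 = 0 then 0 else n / 2) : ℕ) : Fin n)

lemma fin_sub_val {n : ℕ} (a b : Fin n) :
    (a - b).val = if b.val ≤ a.val then a.val - b.val else a.val + n - b.val := by
  have hb := b.isLt
  have ha := a.isLt
  have h0 : (a - b).val = (n - b.val + a.val) % n := by rw [Fin.sub_def]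
  split
  · have e : n - b.val + a.val = (a.val - b.val) + n := by omega
    rw [e, Nat.add_mod_right, Nat.mod_eq_of_lt (by omega)] at h0
    exact h0
  · rw [Nat.mod_eq_of_lt (by omega)] at h0
    omega

lemma cyclePos_inj {n : ℕ} [NeZero n] (hn : 4 ≤ n) :
    Function.Injective (cyclePos n) := by
  intro a b hab
  have ha := a.isLt
  have hb := b.isLt
  unfold cyclePos at hab
  apply_fun Fin.val at hab
  by_cases hpar : n % 2 = 1
  · simp only [hpar, if_pos] at hab
    rcases Nat.even_or_odd a.val with h1 | h1 <;> rcases Nat.even_or_odd b.val with h2 | h2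
    · rw [Nat.even_iff] at h1 h2
      rw [if_pos h1, if_pos h2] at hab
      simp only [Fin.val_natCast] at hab
      rw [Nat.mod_eq_of_lt (by omega), Nat.mod_eq_of_lt (by omega)] at hab
      exact Fin.ext (by omega)
    · rw [Nat.even_iff] at h1; rw [Nat.odd_iff] at h2
      rw [if_pos h1, if_neg (by omega)] at hab
      simp only [Fin.val_natCast] at hab
      rw [Nat.mod_eq_of_lt (by omega), Nat.mod_eq_of_lt (by omega)] at hab
      exact Fin.ext (by omega)
    · rw [Nat.odd_iff] at h1; rw [Nat.even_iff] at h2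
      rw [if_neg (by omega), if_pos h2] at hab
      simp only [Fin.val_natCast] at hab
      rw [Nat.mod_eq_of_lt (by omega), Nat.mod_eq_of_lt (by omega)] at hab
      exact Fin.ext (by omega)
    · rw [Nat.odd_iff] at h1 h2
      rw [if_neg (by omega), if_neg (by omega)] at hab
      simp only [Fin.val_natCast] at hab
      rw [Nat.mod_eq_of_lt (by omega), Nat.mod_eq_of_lt (by omega)] at hab
      exact Fin.ext (by omega)
  · simp only [if_neg hpar, Fin.val_natCast] at hab
    have hh : n / 2 ≥ 2 := by omega
    set h := n / 2 with hhdef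
    have hn2 : n = 2 * h := by omega
    have hmodeq : Nat.ModEq n (a.val / 2 * (h - 1) + (if a.val % 2 = 0 then 0 else h))
        (b.val / 2 * (h - 1) + (if b.val % 2 = 0 then 0 else h)) := hab
    have hdvd : h ∣ n := ⟨2, by omega⟩
    have hmh := hmodeq.of_dvd hdvd
    have hkh : a.val / 2 < h := by omega
    have hk'h : b.val / 2 < h := by omega
    have z : Nat.ModEq h h 0 := (Nat.modEq_zero_iff_dvd).2 dvd_rfl
    have e1 : Nat.ModEq h (a.val / 2 * (h-1)) (b.val / 2 * (h-1)) := by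
      have heq : Nat.ModEq h (if a.val % 2 = 0 then 0 else h) (if b.val % 2 = 0 then 0 else h) := by
        split_ifs
        · rfl
        · exact z.symm
        · exact z
        · rfl
      exact Nat.ModEq.add_right_cancel heq hmh
    have e2 : Nat.ModEq h (a.val / 2) (b.val / 2) := by
      have hm1 : h - 1 + 1 = h := by omega
      have l1 : a.val / 2 * (h-1) + (a.val / 2 + b.val / 2) = a.val / 2 * h + b.val / 2 := by
        calc a.val / 2 * (h-1) + (a.val / 2 + b.val / 2)
            = a.val / 2 * (h - 1 + 1) + b.val / 2 := by ring
          _ = _ := by rw [hm1]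
      have l2 : b.val / 2 * (h-1) + (a.val / 2 + b.val / 2) = b.val / 2 * h + a.val / 2 := by
        calc b.val / 2 * (h-1) + (a.val / 2 + b.val / 2)
            = b.val / 2 * (h - 1 + 1) + a.val / 2 := by ring
          _ = _ := by rw [hm1]
      have e3 : Nat.ModEq h (a.val / 2 * h + b.val / 2) (b.val / 2 * h + a.val / 2) := by
        rw [← l1, ← l2]; exact e1.add_right _
      have z1 : Nat.ModEq h (a.val / 2 * h) 0 := (Nat.modEq_zero_iff_dvd).2 ⟨_, mul_comm _ _⟩
      have z2 : Nat.ModEq h (b.val / 2 * h) 0 := (Nat.modEq_zero_iff_dvd).2 ⟨_, mul_comm _ _⟩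
      calc a.val / 2 ≡ 0 + a.val / 2 [MOD h] := by rw [Nat.zero_add]
        _ ≡ b.val / 2 * h + a.val / 2 [MOD h] := (z2.symm.add_right _)
        _ ≡ a.val / 2 * h + b.val / 2 [MOD h] := e3.symm
        _ ≡ 0 + b.val / 2 [MOD h] := z1.add_right _
        _ = b.val / 2 := by rw [Nat.zero_add]
    have hkk : a.val / 2 = b.val / 2 := e2.eq_of_lt_of_lt hkh hk'h
    have heps : Nat.ModEq n (if a.val % 2 = 0 then 0 else h) (if b.val % 2 = 0 then 0 else h) := by
      rw [hkk] at hmodeq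
      exact Nat.ModEq.add_left_cancel' _ hmodeq
    have heps2 : (if a.val % 2 = 0 then 0 else h) = (if b.val % 2 = 0 then 0 else h) :=
      heps.eq_of_lt_of_lt (by split_ifs <;> omega) (by split_ifs <;> omega)
    split_ifs at heps2 <;> exact Fin.ext (by omega)

lemma cyclePos_dist {n : ℕ} [NeZero n] (hn : 4 ≤ n) (v w : Fin n) (hvw : w.val = v.val + 1)
    (hp : v.val % 2 = 0 ∨ n % 2 = 1) :
    (cyclePos n w - cyclePos n v).val = if n % 2 = 0 then n / 2 else n / 2 + 1 := by
  have ha := v.isLt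
  have hb := w.isLt
  unfold cyclePos
  by_cases hno : n % 2 = 1
  · rw [if_pos hno, if_pos hno, if_neg (show ¬(n % 2 = 0) by omega)]
    rcases Nat.even_or_odd v.val with h1 | h1
    · rw [Nat.even_iff] at h1
      have h2 : w.val % 2 = 1 := by omega
      rw [if_pos h1, if_neg (show ¬(w.val % 2 = 0) by omega)]
      rw [fin_sub_val]
      simp only [Fin.val_natCast]
      rw [Nat.mod_eq_of_lt (show n / 2 + 1 + w.val / 2 < n by omega),
        Nat.mod_eq_of_lt (show v.val / 2 < n by omega)]
      rw [if_pos (by omega)]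
      omega
    · rw [Nat.odd_iff] at h1
      have h2 : w.val % 2 = 0 := by omega
      rw [if_neg (show ¬(v.val % 2 = 0) by omega), if_pos h2]
      rw [fin_sub_val]
      simp only [Fin.val_natCast]
      rw [Nat.mod_eq_of_lt (show w.val / 2 < n by omega),
        Nat.mod_eq_of_lt (show n / 2 + 1 + v.val / 2 < n by omega)]
      rw [if_neg (by omega)]
      omega
  · have hp2 : v.val % 2 = 0 := by tauto
    have h2 : ¬(w.val % 2 = 0) := by omega
    rw [if_neg hno, if_neg hno, if_pos hp2, if_neg h2]
    have e1 : w.val / 2 = v.val / 2 := by omega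
    rw [e1, Nat.add_zero]
    rw [Nat.cast_add, add_sub_cancel_left]
    simp only [Fin.val_natCast]
    rw [Nat.mod_eq_of_lt (show n / 2 < n by omega), if_pos (by omega)]

lemma cyclePos_adjpair {n : ℕ} [NeZero n] (hn : 4 ≤ n) (v w : Fin n) (hvw : w.val = v.val + 1)
    (hp : v.val % 2 = 1) (hne : n % 2 = 0) :
    cyclePos n w - cyclePos n v = -1 := by
  have ha := v.isLt
  have hb := w.isLt
  unfold cyclePos
  rw [if_neg (show ¬(n % 2 = 1) by omega), if_neg (show ¬(n % 2 = 1) by omega),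
    if_pos (show w.val % 2 = 0 by omega), if_neg (show ¬(v.val % 2 = 0) by omega)]
  have e1 : w.val / 2 = v.val / 2 + 1 := by omega
  rw [e1, Nat.add_zero]
  obtain ⟨h', hh'⟩ : ∃ h', n / 2 = h' + 1 := ⟨n / 2 - 1, by omega⟩
  rw [hh']
  simp only [Nat.add_sub_cancel]
  have key : v.val / 2 * h' + (h' + 1) = (v.val / 2 + 1) * h' + 1 := by ring
  rw [key, Nat.cast_add, Nat.cast_one]
  ring


/-- There is a labeling of the cycle `C_n` (`n ≥ 4`) by `{1,…,n}` such that
every admissible path has at most `m` vertices, where `m = n/2 + 1` if `n` is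
even and `m = (n+1)/2 + 1` if `n` is odd. -/
theorem cycle_exists_good_labeling {n : ℕ} (hn : 4 ≤ n)
    (m : ℕ) (hm : m = if Even n then n / 2 + 1 else (n + 1) / 2 + 1) :
    ∃ e : Fin n ≃ Fin n, ∀ l : List (Fin n),
      IsAdmissible ((SimpleGraph.cycleGraph n).map e.toEmbedding) l →
      l.length ≤ m := by
  haveI : NeZero n := ⟨by omega⟩
  -- numeric setup
  set Hv : ℕ := if n % 2 = 0 then n / 2 else n / 2 + 1 with hHvdef
  have hHv1 : 2 ≤ Hv := by rw [hHvdef]; split_ifs <;> omega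
  have hHv2 : Hv < n := by rw [hHvdef]; split_ifs <;> omega
  have hHv3 : n ≤ 2 * Hv := by rw [hHvdef]; split_ifs <;> omega
  have hmH : m = Hv + 1 := by
    rw [hm, hHvdef]
    rcases Nat.even_or_odd n with h | h
    · rw [if_pos h, if_pos (Nat.even_iff.1 h)]
    · have h1 := Nat.odd_iff.1 h
      rw [if_neg (by rw [Nat.even_iff]; omega), if_neg (by omega)]
      omega
  clear_value Hv
  have hposinj := cyclePos_inj (n := n) hn
  have hposbij : Function.Bijective (cyclePos n) := Finite.injective_iff_bijective.1 hposinj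
  set E : Fin n ≃ Fin n := Equiv.ofBijective _ hposbij with hE
  refine ⟨E.symm, ?_⟩
  intro l hadm
  set G := (SimpleGraph.cycleGraph n).map E.symm.toEmbedding with hG
  obtain ⟨i, j, hij, hhead, hlast, ⟨hchain, hnodup⟩, hint, hmin⟩ := hadm
  have hAdj : ∀ u w : Fin n, G.Adj u w ↔
      ((cyclePos n u - cyclePos n w).val = 1 ∨ (cyclePos n w - cyclePos n u).val = 1) := by
    intro u w
    rw [hG, SimpleGraph.map_adj]
    constructor
    · rintro ⟨a, b, hab, ha, hb⟩
      have ha' : a = E u := (Equiv.symm_apply_eq E).1 ha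
      have hb' : b = E w := (Equiv.symm_apply_eq E).1 hb
      subst ha' hb'
      rwa [SimpleGraph.cycleGraph_adj'] at hab
    · intro h
      exact ⟨E u, E w, SimpleGraph.cycleGraph_adj'.2 h, E.symm_apply_apply u,
        E.symm_apply_apply w⟩
  clear_value E G
  -- basic list facts
  have hlnil : l ≠ [] := by rintro rfl; simp at hhead
  have hL1 : 1 ≤ l.length := List.length_pos_iff.2 hlnil
  have hij' : i.val < j.val := hij
  have h0lt : 0 < l.length := hL1
  have hi0 : l[0]'h0lt = i := by
    have h1 : l[0]? = some i := by rw [← List.head?_eq_getElem?]; exact hhead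
    rw [List.getElem?_eq_getElem h0lt] at h1
    exact Option.some_injective _ h1
  have hLlt : l.length - 1 < l.length := by omega
  have hjL : l[l.length - 1]'hLlt = j := by
    have h1 : l[l.length - 1]? = some j := by rw [← List.getLast?_eq_getElem?]; exact hlast
    rw [List.getElem?_eq_getElem hLlt] at h1
    exact Option.some_injective _ h1
  by_cases hL2 : l.length ≤ 2
  · omega
  push_neg at hL2
  -- values of 1 and -1
  have honeval : (1 : Fin n).val = 1 := by
    rw [Fin.val_one', Nat.mod_eq_of_lt (by omega)]
  have hnegval : ∀ x : Fin n, x ≠ 0 → (-x).val = n - x.val := by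
    intro x hx
    have hx' : x.val ≠ 0 := fun h => hx (Fin.ext (by simpa using h))
    rw [← zero_sub, fin_sub_val, if_neg (by simp; omega)]
    simp
  -- adjacency in steps
  have hadjt : ∀ t (h : t + 1 < l.length),
      cyclePos n (l[t+1]'h) - cyclePos n (l[t]'(by omega)) = 1 ∨
      cyclePos n (l[t+1]'h) - cyclePos n (l[t]'(by omega)) = -1 := by
    intro t h
    have hc := List.isChain_iff_getElem.1 hchain t (by omega)
    rw [hAdj] at hc
    rcases hc with hc | hc
    · right
      have : cyclePos n (l[t]'(by omega)) - cyclePos n (l[t+1]'h) = 1 :=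
        Fin.ext (by rw [hc, honeval])
      have h2 := congrArg Neg.neg this
      rwa [neg_sub] at h2
    · left
      exact Fin.ext (by rw [hc, honeval])
  set d : Fin n := cyclePos n (l[1]'(by omega)) - cyclePos n (l[0]'(by omega)) with hddef
  clear_value d
  have hdd : d = 1 ∨ d = -1 := by rw [hddef]; exact hadjt 0 (by omega)
  have hdd2 : d * d = 1 := by rcases hdd with h | h <;> rw [h] <;> ring
  have hstep : ∀ t (h : t + 1 < l.length),
      cyclePos n (l[t+1]'h) = cyclePos n (l[t]'(by omega)) + d := by
    intro t
    induction t with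
    | zero => intro h; rw [hddef]; ring
    | succ t ih =>
      intro h
      have hprev := ih (by omega)
      have htt : t < l.length := by omega
      rcases hadjt (t+1) h with hc | hc <;> rcases hdd with hd | hd <;>
          have h3 := sub_eq_iff_eq_add.1 hc
      · rw [h3, hd]; ring
      · exfalso
        have h2 : cyclePos n (l[t+1+1]'h) = cyclePos n (l[t]'htt) := by
          rw [h3, hprev, hd]; ring
        have h5 := (hnodup.getElem_inj_iff).1 (hposinj h2)
        omega
      · exfalso
        have h2 : cyclePos n (l[t+1+1]'h) = cyclePos n (l[t]'htt) := by
          rw [h3, hprev, hd]; ring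
        have h5 := (hnodup.getElem_inj_iff).1 (hposinj h2)
        omega
      · rw [h3, hd]; ring
  have harc : ∀ t (ht : t < l.length),
      cyclePos n (l[t]'ht) = cyclePos n (l[0]'h0lt) + (t : Fin n) * d := by
    intro t
    induction t with
    | zero => intro ht; simp
    | succ t ih =>
      intro ht
      rw [hstep t ht, ih (by omega)]
      push_cast
      ring
  have hLn : l.length ≤ n := by
    have := hnodup.length_le_card
    simpa using this
  -- the index function
  set tau : Fin n → ℕ := fun w => ((cyclePos n w - cyclePos n (l[0]'h0lt)) * d).val with htaudef
  have htauval : ∀ w, tau w < n := fun w => Fin.isLt _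
  have htaucast : ∀ w, ((tau w : ℕ) : Fin n) = (cyclePos n w - cyclePos n (l[0]'h0lt)) * d :=
    fun w => Fin.cast_val_eq_self _
  have htau1 : ∀ t (ht : t < l.length), tau (l[t]'ht) = t := by
    intro t ht
    have : (cyclePos n (l[t]'ht) - cyclePos n (l[0]'h0lt)) * d = ((t : ℕ) : Fin n) := by
      rw [harc t ht]
      calc (cyclePos n (l[0]'h0lt) + (t : Fin n) * d - cyclePos n (l[0]'h0lt)) * d
          = (t : Fin n) * (d * d) := by ring
        _ = ((t : ℕ) : Fin n) := by rw [hdd2]; ring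
    rw [htaudef]
    simp only [this, Fin.val_natCast]
    exact Nat.mod_eq_of_lt (by omega)
  have htau2 : ∀ w, tau w < l.length → w ∈ l := by
    intro w hw
    have h2 := harc (tau w) hw
    rw [htaucast w] at h2
    have h3 : cyclePos n (l[tau w]'hw) = cyclePos n w := by
      rw [h2]
      calc cyclePos n (l[0]'h0lt) + (cyclePos n w - cyclePos n (l[0]'h0lt)) * d * d
          = cyclePos n w + (cyclePos n w - cyclePos n (l[0]'h0lt)) * (d * d - 1) := by ring
        _ = cyclePos n w := by rw [hdd2]; ring
    have h4 := hposinj h3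
    rw [← h4]
    exact List.getElem_mem _
  have hnotmem : ∀ w, w ∉ l → l.length ≤ tau w :=
    fun w hw => not_lt.1 (fun hlt => hw (htau2 w hlt))
  have htau3 : ∀ u w : Fin n, ((tau u : ℕ) : Fin n) - ((tau w : ℕ) : Fin n) =
      (cyclePos n u - cyclePos n w) * d := by
    intro u w
    rw [htaucast, htaucast]
    ring
  have htauinj : ∀ u w : Fin n, tau u = tau w → u = w := by
    intro u w huw
    have h1 : ((tau u : ℕ) : Fin n) = ((tau w : ℕ) : Fin n) := by rw [huw]
    rw [htaucast, htaucast] at h1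
    have h2 := congrArg (· * d) h1
    have h3 : cyclePos n u = cyclePos n w := by
      have lhs : (cyclePos n u - cyclePos n (l[0]'h0lt)) * d * d
          = cyclePos n u - cyclePos n (l[0]'h0lt) := by
        rw [mul_assoc, hdd2, mul_one]
      have rhs : (cyclePos n w - cyclePos n (l[0]'h0lt)) * d * d
          = cyclePos n w - cyclePos n (l[0]'h0lt) := by
        rw [mul_assoc, hdd2, mul_one]
      rw [lhs, rhs] at h2
      have := congrArg (· + cyclePos n (l[0]'h0lt)) h2
      simpa using this
    exact hposinj h3
  clear_value tau
  have htaui : tau i = 0 := by rw [← hi0]; exact htau1 0 h0lt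
  have htauj : tau j = l.length - 1 := by rw [← hjL]; exact htau1 (l.length - 1) hLlt
  -- strictly-between labels are not on the path
  have hnotin : ∀ w : Fin n, i < w → w < j → w ∉ l := by
    intro w h1 h2 hmem
    obtain ⟨t, ht, rfl⟩ := List.mem_iff_getElem.1 hmem
    by_cases ht0 : t = 0
    · subst ht0
      rw [hi0] at h1
      exact lt_irrefl _ h1
    by_cases htL : t = l.length - 1
    · subst htL
      rw [hjL] at h2
      exact lt_irrefl _ h2
    · obtain ⟨s, rfl⟩ : ∃ s, t = s + 1 := ⟨t - 1, by omega⟩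
      have hlen : s < l.tail.dropLast.length := by
        simp only [List.length_dropLast, List.length_tail]; omega
      have hmem2 : l[s+1]'ht ∈ l.tail.dropLast := by
        have he : l.tail.dropLast[s]'hlen = l[s+1]'ht := by
          rw [List.getElem_dropLast, List.getElem_tail]
        rw [← he]
        exact List.getElem_mem _
      rcases hint _ hmem2 with hc | hc
      · exact lt_asymm h1 hc
      · exact lt_asymm h2 hc
  -- helper: value of a subtraction of casts
  have hcsv : ∀ s t : ℕ, s < n → t < n →
      (((t : ℕ) : Fin n) - ((s : ℕ) : Fin n)).val
        = if s ≤ t then t - s else t + n - s := by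
    intro s t hs ht
    rw [fin_sub_val]
    simp only [Fin.val_natCast]
    rw [Nat.mod_eq_of_lt hs, Nat.mod_eq_of_lt ht]
  have hXval : ∀ C : Fin n, C.val = Hv → ((C * d).val = Hv ∨ (C * d).val = n - Hv) := by
    intro C hC
    have hCne : C ≠ 0 := by
      intro h0
      rw [h0] at hC
      simp at hC
      omega
    rcases hdd with h | h
    · left; rw [h, mul_one]; exact hC
    · right; rw [h, mul_neg_one, hnegval C hCne, hC]
  -- main case analysis
  rcases (show j.val = i.val + 1 ∨ i.val + 2 ≤ j.val by omega) with hcase | hcase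
  · -- j = i + 1
    have hrel := htau3 j i
    rw [htaui, htauj] at hrel
    by_cases hpar : i.val % 2 = 0 ∨ n % 2 = 1
    · have hcval : (cyclePos n j - cyclePos n i).val = Hv := by
        rw [hHvdef]; exact cyclePos_dist hn i j hcase hpar
      have hX := hXval _ hcval
      rw [← hrel] at hX
      rw [hcsv 0 (l.length - 1) (by omega) (by omega), if_pos (by omega)] at hX
      omega
    · push_neg at hpar
      have hC : cyclePos n j - cyclePos n i = -1 :=
        cyclePos_adjpair hn i j hcase (by omega) (by omega)
      rw [hC] at hrel
      have hval := congrArg Fin.val hrel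
      rw [hcsv 0 (l.length - 1) (by omega) (by omega), if_pos (by omega)] at hval
      have hneg1 : ((-1 : Fin n) * d).val = 1 ∨ ((-1 : Fin n) * d).val = n - 1 := by
        rcases hdd with h | h
        · right; rw [h, mul_one, hnegval 1 (by
            intro h0
            have h1 := congrArg Fin.val h0
            rw [honeval] at h1
            simp at h1), honeval]
        · left; rw [h, mul_neg_one, neg_neg, honeval]
      rcases hneg1 with h | h
      · omega
      · -- l.length = n : contradiction with minimality
        exfalso
        have hLeq : l.length = n := by omega
        have hintlen : l.tail.dropLast.length = l.length - 2 := by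
          simp only [List.length_dropLast, List.length_tail]
          omega
        refine hmin [] (List.nil_sublist _) ?_ ?_
        · intro hcontra
          apply_fun List.length at hcontra
          rw [hintlen] at hcontra
          simp at hcontra
          omega
        · constructor
          · simp only [List.nil_append]
            rw [show List.Chain' G.Adj [i, j] ↔ G.Adj i j from List.isChain_pair, hAdj]
            left
            have h1 : cyclePos n i - cyclePos n j = 1 := by
              have h2 := congrArg Neg.neg hC
              rwa [neg_sub, neg_neg] at h2
            rw [h1, honeval]
          · simp only [List.nil_append]
            simp [hij.ne]
  · -- j ≥ i + 2
    have hi1lt : i.val + 1 < n := by omega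
    set w1 : Fin n := ⟨i.val + 1, hi1lt⟩ with hw1
    have hw1v : w1.val = i.val + 1 := rfl
    have hw1notin : w1 ∉ l :=
      hnotin w1 (by rw [Fin.lt_def, hw1v]; omega) (by rw [Fin.lt_def, hw1v]; omega)
    have hw1tau : l.length ≤ tau w1 := hnotmem _ hw1notin
    by_cases hpar : i.val % 2 = 0 ∨ n % 2 = 1
    · have hcval : (cyclePos n w1 - cyclePos n i).val = Hv := by
        rw [hHvdef]; exact cyclePos_dist hn i w1 hw1v hpar
      have hrel := htau3 w1 i
      rw [htaui] at hrel
      have hX := hXval _ hcval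
      rw [← hrel] at hX
      have hv2 := hcsv 0 (tau w1) (by omega) (htauval w1)
      rw [if_pos (by omega)] at hv2
      rw [hv2] at hX
      omega
    · push_neg at hpar
      have hi2lt : i.val + 2 < n := by omega
      set w2 : Fin n := ⟨i.val + 2, hi2lt⟩ with hw2
      have hw2v : w2.val = i.val + 2 := rfl
      have hcval : (cyclePos n w2 - cyclePos n w1).val = Hv := by
        rw [hHvdef]
        exact cyclePos_dist hn w1 w2 (by rw [hw2v, hw1v]) (Or.inl (by rw [hw1v]; omega))
      have hrel := htau3 w2 w1
      have hX := hXval _ hcval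
      rw [← hrel] at hX
      obtain ⟨s1, hs1⟩ : ∃ s1, tau w1 = s1 := ⟨_, rfl⟩
      obtain ⟨t1, ht1⟩ : ∃ t1, tau w2 = t1 := ⟨_, rfl⟩
      have hs1n : s1 < n := hs1 ▸ htauval w1
      have ht1n : t1 < n := ht1 ▸ htauval w2
      rw [hs1] at hw1tau
      by_cases hj2 : j.val = i.val + 2
      · have hw2j : w2 = j := Fin.ext (by rw [hw2v, hj2])
        have htw2 : tau w2 = l.length - 1 := by rw [hw2j, htauj]
        rw [htw2, hs1] at hX
        have hv2 := hcsv s1 (l.length - 1) (by omega) (by omega)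
        rw [if_neg (by omega)] at hv2
        rw [hv2] at hX
        rcases hX with hX | hX <;> omega
      · have hw2notin : w2 ∉ l :=
          hnotin w2 (by rw [Fin.lt_def, hw2v]; omega) (by rw [Fin.lt_def, hw2v]; omega)
        have hw2tau : l.length ≤ t1 := ht1 ▸ hnotmem _ hw2notin
        have hnetau : t1 ≠ s1 := by
          intro hq
          have h9 : tau w2 = tau w1 := by rw [hs1, ht1, hq]
          have := congrArg Fin.val (htauinj _ _ h9)
          rw [hw2v, hw1v] at this
          omega
        rw [hs1, ht1] at hX
        rcases le_or_gt s1 t1 with hle | hlt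
        · have hv2 := hcsv s1 t1 (by omega) (by omega)
          rw [if_pos hle] at hv2
          rw [hv2] at hX
          rcases hX with hX | hX <;> omega
        · have hv2 := hcsv s1 t1 (by omega) (by omega)
          rw [if_neg (by omega)] at hv2
          rw [hv2] at hX
          rcases hX with hX | hX <;> omega
end

section
/- Let G be a simple graph on {1,…,n} whose labeling satisfies the weakly closed condition: for every edge {i,j} ∈ E(G) with j > i + 1 and every k with i < k < j, one has {i,k} ∈ E(G) or {k,j} ∈ E(G). Then every admissible path of G has at most 4 vertices. -/
private lemma exists_transition {α : Type*} (P Q : α → Prop)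
    (hPQ : ∀ v, P v → Q v → False) :
    ∀ t : List α, (∀ v ∈ t, P v ∨ Q v) →
      (∀ a ∈ t.head?, P a) → (∀ b ∈ t.getLast?, Q b) → t ≠ [] →
      ∃ t₁ a b t₂, t = t₁ ++ a :: b :: t₂ ∧ P a ∧ Q b := by
  intro t
  induction t with
  | nil => simp
  | cons v rest ih =>
    intro hall hhead hlast _
    have hPv : P v := hhead v (by simp)
    match rest with
    | [] =>
      exact absurd (hlast v (by simp)) (fun h => hPQ v hPv h)
    | w :: rest' =>
      by_cases hQ : Q w
      · exact ⟨[], v, w, rest', rfl, hPv, hQ⟩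
      · have hPw : P w := (hall w (by simp)).resolve_right hQ
        obtain ⟨t₁, a, b, t₂, heq, hPa, hQb⟩ :=
          ih (fun x hx => hall x (by simp [hx])) (by simpa using hPw)
            (by rw [List.getLast?_cons_cons] at hlast; exact hlast) (by simp)
        exact ⟨v :: t₁, a, b, t₂, by simp [heq], hPa, hQb⟩

/-- If the labeling of `G` satisfies the weakly closed condition, then every
admissible path of `G` has at most 4 vertices. -/
theorem weakly_closed_admissible_le_four {n : ℕ} (G : SimpleGraph (Fin n))
    (hwc : ∀ i j : Fin n, G.Adj i j → (i : ℕ) + 1 < (j : ℕ) →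
      ∀ k : Fin n, i < k → k < j → G.Adj i k ∨ G.Adj k j) :
    ∀ l : List (Fin n), IsAdmissible G l → l.length ≤ 4 := by
  rintro l ⟨i, j, hij, hh, hl, ⟨hchain, hnodup⟩, hint, hmin⟩
  by_contra hlen
  push_neg at hlen
  -- decompose l = i :: t ++ [j]
  obtain ⟨l₂, rfl⟩ : ∃ l₂, l = i :: l₂ := by
    cases l with
    | nil => simp at hh
    | cons a l₂ => exact ⟨l₂, by simp at hh; rw [hh]⟩
  have hl₂ne : l₂ ≠ [] := by
    rintro rfl
    simp at hl
    exact hij.ne hl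
  set t := l₂.dropLast with ht
  have hsplit : l₂ = t ++ [j] := by
    have hl2 : l₂.getLast? = some j := by
      cases l₂ with
      | nil => exact absurd rfl hl₂ne
      | cons v rest => rwa [List.getLast?_cons_cons] at hl
    have : l₂.getLast hl₂ne = j := by
      rw [List.getLast?_eq_getLast hl₂ne] at hl2
      exact Option.some_injective _ hl2
    rw [ht, ← this, List.dropLast_append_getLast]
  have htl : 3 ≤ t.length := by
    have : (i :: l₂).length = t.length + 2 := by
      rw [hsplit]; simp
    omega
  have htdl : (i :: l₂).tail.dropLast = t := by
    rw [hsplit]; simp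
  rw [htdl] at hint hmin
  rw [hsplit] at hchain hnodup
  unfold List.Chain' at hchain
  -- no chord facts
  have Hij : ¬ G.Adj i j := by
    intro hadj
    refine hmin [] (List.nil_sublist _) (by rintro h; rw [← h] at htl; simp at htl) ?_
    refine ⟨?_, ?_⟩
    · simp [List.Chain', List.isChain_cons_cons, hadj]
    · simp [hij.ne]
  have Hsuffix : ∀ t₁ (a : Fin n) t₂, t = t₁ ++ a :: t₂ → t₁ ≠ [] → ¬ G.Adj i a := by
    intro t₁ a t₂ heq ht₁ hadj
    refine hmin (a :: t₂) (heq ▸ List.sublist_append_right t₁ _) ?_ ⟨?_, ?_⟩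
    · intro h
      rw [heq] at h
      have := congrArg List.length h
      simp at this
      exact ht₁ this
    · unfold List.Chain'; rw [List.cons_append, List.isChain_cons_cons]
      constructor
      · exact hadj
      · refine hchain.suffix ?_
        rw [heq]
        exact ⟨i :: t₁, by simp⟩
    · refine hnodup.sublist ?_
      rw [heq, List.cons_append, List.append_assoc]
      exact (List.sublist_append_right t₁ _).cons₂ i
  have Hprefix : ∀ t₁ (a : Fin n) t₂, t = t₁ ++ a :: t₂ → t₂ ≠ [] → ¬ G.Adj a j := by
    intro t₁ a t₂ heq ht₂ hadj
    refine hmin (t₁ ++ [a]) ?_ ?_ ⟨?_, ?_⟩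
    · rw [heq]
      exact (List.append_sublist_append_left t₁).mpr ((List.nil_sublist t₂).cons₂ a)
    · intro h
      rw [heq] at h
      have := congrArg List.length h
      simp at this
      exact ht₂ this
    · unfold List.Chain'; rw [show i :: ((t₁ ++ [a]) ++ [j]) = (i :: (t₁ ++ [a])) ++ [j] by simp,
        List.isChain_append]
      refine ⟨?_, by simp, ?_⟩
      · refine hchain.prefix ?_
        refine ⟨t₂ ++ [j], ?_⟩
        rw [heq]; simp
      · intro x hx y hy
        have hxa : (i :: (t₁ ++ [a])).getLast? = some a := by
          rw [show i :: (t₁ ++ [a]) = (i :: t₁) ++ [a] by simp, List.getLast?_concat]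
        rw [hxa] at hx
        simp at hx hy
        exact hx ▸ hy ▸ hadj
    · refine hnodup.sublist ?_
      rw [heq]
      refine List.Sublist.cons₂ i ?_
      simp only [List.append_assoc, List.singleton_append, List.cons_append]
      exact (List.append_sublist_append_left t₁).mpr
        ((List.sublist_append_right t₂ [j]).cons₂ a)
  -- head of t is < i
  have htne : t ≠ [] := by
    intro h
    rw [h] at htl
    simp at htl
  obtain ⟨v₁, trest, htv⟩ := List.exists_cons_of_ne_nil htne
  have hadj_iv₁ : G.Adj i v₁ := by
    have h2 := hchain
    rw [htv, List.cons_append] at h2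
    exact (List.isChain_cons_cons.mp h2).1
  have hv₁ : v₁ < i := by
    rcases hint v₁ (by rw [htv]; simp) with h | h
    · exact h
    · exfalso
      have h1 : (i : ℕ) + 1 < (v₁ : ℕ) := by
        have := hij
        rw [Fin.lt_def] at this h
        omega
      rcases hwc i v₁ hadj_iv₁ h1 j hij h with h2 | h2
      · exact Hij h2
      · refine Hprefix [] v₁ trest (by simp [htv]) ?_ h2.symm
        rintro rfl
        rw [htv] at htl; simp at htl
  -- last of t is > j
  set vm := t.getLast htne with hvm
  have hadj_vmj : G.Adj vm j := by
    rcases List.isChain_append.mp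
      (show List.Chain' G.Adj ((i :: t) ++ [j]) by rw [List.cons_append]; exact hchain)
      with ⟨_, _, h⟩
    refine h vm ?_ j rfl
    rw [Option.mem_def, List.getLast?_eq_getLast (l := i :: t) (by simp), List.getLast_cons htne,
      hvm]
  have hvmj : j < vm := by
    rcases hint vm (by exact List.getLast_mem htne) with h | h
    · exfalso
      have h1 : (vm : ℕ) + 1 < (j : ℕ) := by
        have := hij
        rw [Fin.lt_def] at this h
        omega
      rcases hwc vm j hadj_vmj h1 i h hij with h2 | h2
      · refine Hsuffix t.dropLast vm []
          (by rw [hvm]; exact (List.dropLast_append_getLast htne).symm) ?_ h2.symm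
        intro hd
        have := List.length_dropLast (xs := t)
        rw [hd] at this
        simp at this
        omega
      · exact Hij h2
    · exact h
  -- find transition
  obtain ⟨t₁, a, b, t₂, heq, hPa, hQb⟩ :=
    exists_transition (fun v => v < i) (fun v => j < v)
      (fun v h1 h2 => absurd (h1.trans (hij.trans h2)) (lt_irrefl v)) t hint
      (by rw [htv]; intro x hx; simp at hx; subst hx; exact hv₁)
      (by intro x hx; rw [List.getLast?_eq_getLast htne] at hx; simp at hx; subst hx; exact hvmj)
      htne
  have hadj_ab : G.Adj a b := by
    have : List.Chain' G.Adj (a :: b :: t₂) := by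
      refine hchain.infix ?_
      exact ⟨i :: t₁, [j], by rw [heq]; simp⟩
    exact (List.isChain_cons_cons.mp this).1
  have hab : (a : ℕ) + 1 < (b : ℕ) := by
    have h1 := hPa; have h2 := hQb; have h3 := hij
    rw [Fin.lt_def] at h1 h2 h3
    omega
  have ht₁ : t₁ = [] := by
    rcases hwc a b hadj_ab hab i hPa (hij.trans hQb) with h2 | h2
    · by_contra h
      exact Hsuffix t₁ a (b :: t₂) heq h h2.symm
    · exact absurd h2 (Hsuffix (t₁ ++ [a]) b t₂ (by rw [heq]; simp) (by simp))
  have ht₂ : t₂ = [] := by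
    rcases hwc a b hadj_ab hab j (hPa.trans hij) hQb with h2 | h2
    · exact absurd h2 (Hprefix t₁ a (b :: t₂) heq (by simp))
    · by_contra h
      exact Hprefix (t₁ ++ [a]) b t₂ (by rw [heq]; simp) h h2.symm
  rw [ht₁, ht₂] at heq
  rw [heq] at htl
  simp at htl
end

section
/- Let T be the tree with 16 vertices consisting of a center vertex c, five branch vertices b_1,…,b_5 each adjacent to c, and ten leaves, where each branch vertex b_k is adjacent to exactly two leaves. Then there is no bijective labeling of the vertices of T by {1,…,16} such that the graph distance d(i, i+1) ≤ 2 for all 1 ≤ i ≤ 15. -/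
/-- The spider-like tree on 16 vertices: center `0`, branch vertices `1,…,5`
adjacent to `0`, and for each branch vertex `k` two leaves `2k+4` and `2k+5`. -/
def spiderTree : SimpleGraph (Fin 16) :=
  SimpleGraph.fromEdgeSet
    {s(0, 1), s(0, 2), s(0, 3), s(0, 4), s(0, 5),
     s(1, 6), s(1, 7), s(2, 8), s(2, 9), s(3, 10), s(3, 11),
     s(4, 12), s(4, 13), s(5, 14), s(5, 15)}

instance : DecidableRel spiderTree.Adj := fun a b =>
  decidable_of_iff (s(a,b) ∈ ({s(0, 1), s(0, 2), s(0, 3), s(0, 4), s(0, 5),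
     s(1, 6), s(1, 7), s(2, 8), s(2, 9), s(3, 10), s(3, 11),
     s(4, 12), s(4, 13), s(5, 14), s(5, 15)} : Finset (Sym2 (Fin 16))) ∧ a ≠ b) (by
    rw [spiderTree, SimpleGraph.fromEdgeSet_adj]
    simp)

/-- `D2 u v`: there is a walk of length ≤ 2 from `u` to `v` in the spider tree. -/
def D2 (u v : Fin 16) : Prop :=
  u = v ∨ spiderTree.Adj u v ∨ ∃ c, spiderTree.Adj u c ∧ spiderTree.Adj c v

instance : DecidableRel D2 := fun _ _ => by unfold D2; infer_instance

lemma reach0 : ∀ v, spiderTree.Reachable 0 v := by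
  have a : ∀ x y : Fin 16, spiderTree.Adj x y → spiderTree.Reachable x y :=
    fun _ _ h => h.reachable
  intro v
  fin_cases v
  · rfl
  · exact a _ _ (by decide)
  · exact a _ _ (by decide)
  · exact a _ _ (by decide)
  · exact a _ _ (by decide)
  · exact a _ _ (by decide)
  · exact (a _ 1 (by decide)).trans (a _ _ (by decide))
  · exact (a _ 1 (by decide)).trans (a _ _ (by decide))
  · exact (a _ 2 (by decide)).trans (a _ _ (by decide))
  · exact (a _ 2 (by decide)).trans (a _ _ (by decide))
  · exact (a _ 3 (by decide)).trans (a _ _ (by decide))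
  · exact (a _ 3 (by decide)).trans (a _ _ (by decide))
  · exact (a _ 4 (by decide)).trans (a _ _ (by decide))
  · exact (a _ 4 (by decide)).trans (a _ _ (by decide))
  · exact (a _ 5 (by decide)).trans (a _ _ (by decide))
  · exact (a _ 5 (by decide)).trans (a _ _ (by decide))

lemma spider_conn : spiderTree.Connected := by
  rw [SimpleGraph.connected_iff]
  exact ⟨fun u v => (reach0 u).symm.trans (reach0 v), ⟨0⟩⟩

lemma walk_le_two {u v : Fin 16} (w : spiderTree.Walk u v) (h : w.length ≤ 2) : D2 u v := by
  match w with
  | .nil => exact Or.inl rfl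
  | .cons h' .nil => exact Or.inr (Or.inl h')
  | .cons h' (.cons h'' .nil) => exact Or.inr (Or.inr ⟨_, h', h''⟩)
  | .cons _ (.cons _ (.cons _ w')) => simp [SimpleGraph.Walk.length_cons] at h

lemma dist_two {e : Fin 16 ≃ Fin 16} {i j : Fin 16}
    (h : (spiderTree.map e.toEmbedding).dist i j ≤ 2) : D2 (e.symm i) (e.symm j) := by
  have hc : (spiderTree.map e.toEmbedding).Connected :=
    ((SimpleGraph.Iso.map e spiderTree).connected_iff).mp spider_conn
  obtain ⟨w, hw⟩ := hc.exists_walk_length_eq_dist i j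
  have hl : (w.map (SimpleGraph.Iso.map e spiderTree).symm.toHom).length ≤ 2 := by
    rw [SimpleGraph.Walk.length_map, hw]; exact h
  simpa using walk_le_two _ hl

/-- Branch vertex of branch `k`. -/
def B (k : Fin 5) : Fin 16 := ⟨(k : ℕ) + 1, by omega⟩
/-- First leaf of branch `k`. -/
def L1 (k : Fin 5) : Fin 16 := ⟨2 * (k : ℕ) + 6, by omega⟩
/-- Second leaf of branch `k`. -/
def L2 (k : Fin 5) : Fin 16 := ⟨2 * (k : ℕ) + 7, by omega⟩

lemma nbrs_L1 : ∀ (k : Fin 5) (x : Fin 16), D2 (L1 k) x ∨ D2 x (L1 k) →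
    x = L1 k ∨ x = 0 ∨ x = B k ∨ x = L2 k := by decide

lemma nbrs_L2 : ∀ (k : Fin 5) (x : Fin 16), D2 (L2 k) x ∨ D2 x (L2 k) →
    x = L2 k ∨ x = 0 ∨ x = B k ∨ x = L1 k := by decide

/-- There is no labeling of the spider tree by `{1,…,16}` such that
`d(i, i+1) ≤ 2` for all `1 ≤ i ≤ 15`. -/
theorem spiderTree_no_labeling :
    ¬ ∃ e : Fin 16 ≃ Fin 16, ∀ i j : Fin 16, (j : ℕ) = (i : ℕ) + 1 →
        (spiderTree.map e.toEmbedding).dist i j ≤ 2 := by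
  rintro ⟨e, he⟩
  -- `F p` is the vertex occupying position `p` (for `p ≤ 15`).
  set F : ℕ → Fin 16 := fun n => e.symm ⟨n % 16, by omega⟩ with hF
  have Feq : ∀ (p : ℕ) (h : p < 16), F p = e.symm ⟨p, h⟩ := by
    intro p h
    simp only [hF]
    congr 1
    exact Fin.ext (Nat.mod_eq_of_lt h)
  have Finj : ∀ {m n : ℕ}, m ≤ 15 → n ≤ 15 → F m = F n → m = n := by
    intro m n hm hn h
    rw [Feq m (by omega), Feq n (by omega)] at h
    have := e.symm.injective h
    exact congrArg Fin.val this
  have Fpos : ∀ v : Fin 16, F ((e v : ℕ)) = v := by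
    intro v
    rw [Feq _ (e v).isLt]
    simp
  have key : ∀ p : ℕ, p ≤ 14 → D2 (F p) (F (p + 1)) := by
    intro p hp
    have h := dist_two (he ⟨p, by omega⟩ ⟨p + 1, by omega⟩ rfl)
    rwa [← Feq p (by omega), ← Feq (p + 1) (by omega)] at h
  set q : ℕ := (e 0 : ℕ) with hq
  have hq15 : q ≤ 15 := by have := (e 0).isLt; omega
  have hFq : F q = 0 := by rw [hq]; exact Fpos 0
  -- Every branch is "served" by a path endpoint or by the center.
  have serve : ∀ k : Fin 5, ∃ p : ℕ, p ≤ 15 ∧ (F p = L1 k ∨ F p = L2 k) ∧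
      (p = 0 ∨ p = 15 ∨ p = q + 1 ∨ p + 1 = q) := by
    intro k
    by_contra hno
    push_neg at hno
    set p1 : ℕ := (e (L1 k) : ℕ) with hp1d
    set p2 : ℕ := (e (L2 k) : ℕ) with hp2d
    have hp1 : F p1 = L1 k := by rw [hp1d]; exact Fpos _
    have hp2 : F p2 = L2 k := by rw [hp2d]; exact Fpos _
    have hp1le : p1 ≤ 15 := by have := (e (L1 k)).isLt; omega
    have hp2le : p2 ≤ 15 := by have := (e (L2 k)).isLt; omega
    obtain ⟨h10, h115, h1q1, h1q2⟩ := hno p1 hp1le (Or.inl hp1)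
    obtain ⟨h20, h215, h2q1, h2q2⟩ := hno p2 hp2le (Or.inr hp2)
    have hb1 : 1 ≤ p1 ∧ p1 ≤ 14 := ⟨by omega, by omega⟩
    have hb2 : 1 ≤ p2 ∧ p2 ≤ 14 := ⟨by omega, by omega⟩
    -- the positions next to a leaf do not hold the center
    have hnc : ∀ m : ℕ, m ≤ 15 → F m = 0 → m = q := by
      intro m hm h
      exact Finj hm hq15 (h.trans hFq.symm)
    have hx0 : F (p1 - 1) ≠ 0 := fun h => by
      have := hnc _ (by omega) h; omega
    have hy0 : F (p1 + 1) ≠ 0 := fun h => by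
      have := hnc _ (by omega) h; omega
    have hu0 : F (p2 - 1) ≠ 0 := fun h => by
      have := hnc _ (by omega) h; omega
    have hv0 : F (p2 + 1) ≠ 0 := fun h => by
      have := hnc _ (by omega) h; omega
    have d1 : D2 (F (p1 - 1)) (F p1) := by
      have h := key (p1 - 1) (by omega)
      have : p1 - 1 + 1 = p1 := by omega
      rwa [this] at h
    have d2 : D2 (F p1) (F (p1 + 1)) := key p1 (by omega)
    have d3 : D2 (F (p2 - 1)) (F p2) := by
      have h := key (p2 - 1) (by omega)
      have : p2 - 1 + 1 = p2 := by omega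
      rwa [this] at h
    have d4 : D2 (F p2) (F (p2 + 1)) := key p2 (by omega)
    have hx : F (p1 - 1) = B k ∨ F (p1 - 1) = L2 k := by
      rcases nbrs_L1 k (F (p1 - 1)) (Or.inr (hp1 ▸ d1)) with h | h | h | h
      · exact absurd (Finj (by omega) hp1le (h.trans hp1.symm)) (by omega)
      · exact absurd h hx0
      · exact Or.inl h
      · exact Or.inr h
    have hy : F (p1 + 1) = B k ∨ F (p1 + 1) = L2 k := by
      rcases nbrs_L1 k (F (p1 + 1)) (Or.inl (hp1 ▸ d2)) with h | h | h | h
      · exact absurd (Finj (by omega) hp1le (h.trans hp1.symm)) (by omega)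
      · exact absurd h hy0
      · exact Or.inl h
      · exact Or.inr h
    have hu : F (p2 - 1) = B k ∨ F (p2 - 1) = L1 k := by
      rcases nbrs_L2 k (F (p2 - 1)) (Or.inr (hp2 ▸ d3)) with h | h | h | h
      · exact absurd (Finj (by omega) hp2le (h.trans hp2.symm)) (by omega)
      · exact absurd h hu0
      · exact Or.inl h
      · exact Or.inr h
    have hv : F (p2 + 1) = B k ∨ F (p2 + 1) = L1 k := by
      rcases nbrs_L2 k (F (p2 + 1)) (Or.inl (hp2 ▸ d4)) with h | h | h | h
      · exact absurd (Finj (by omega) hp2le (h.trans hp2.symm)) (by omega)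
      · exact absurd h hv0
      · exact Or.inl h
      · exact Or.inr h
    rcases hx with hx | hx <;> rcases hy with hy | hy
    · -- B at both sides of L1: impossible
      exact absurd (Finj (by omega) (by omega) (hx.trans hy.symm)) (by omega)
    · -- F (p1-1) = B k, F (p1+1) = L2 k, so p2 = p1 + 1
      have hpp : p2 = p1 + 1 := Finj hp2le (by omega) (hp2.trans (hy.symm))
      -- then F (p2-1) = F p1 = L1 k, so F (p2+1) = B k
      have hvB : F (p2 + 1) = B k := by
        rcases hv with h | h
        · exact h
        · exact absurd (Finj (by omega) hp1le (h.trans hp1.symm)) (by omega)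
      exact absurd (Finj (by omega) (by omega) (hx.trans hvB.symm)) (by omega)
    · -- F (p1-1) = L2 k, so p2 = p1 - 1; F (p1+1) = B k
      have hpp : p2 = p1 - 1 := Finj hp2le (by omega) (hp2.trans (hx.symm))
      have huB : F (p2 - 1) = B k := by
        rcases hu with h | h
        · exact h
        · exact absurd (Finj (by omega) hp1le (h.trans hp1.symm)) (by omega)
      exact absurd (Finj (by omega) (by omega) (huB.trans hy.symm)) (by omega)
    · -- L2 at both sides of L1: impossible
      exact absurd (Finj (by omega) (by omega) (hx.trans hy.symm)) (by omega)
  -- choose the witnesses and apply pigeonhole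
  choose w hw1 hw2 hw3 using serve
  have hmem : ∀ k, w k ∈ ({0, 15, q + 1, q - 1} : Finset ℕ) := by
    intro k
    simp only [Finset.mem_insert, Finset.mem_singleton]
    rcases hw3 k with h | h | h | h <;> omega
  have hinj : ∀ k k' : Fin 5, w k = w k' → k = k' := by
    intro k k' hkk
    have hv : (F (w k)).val = (F (w k')).val := by rw [hkk]
    have hk5 := k.isLt
    have hk5' := k'.isLt
    rcases hw2 k with a | a <;> rcases hw2 k' with b | b <;>
      rw [a, b] at hv <;> simp only [L1, L2] at hv <;> exact Fin.ext (by omega)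
  have card5 : (Finset.univ : Finset (Fin 5)).card ≤
      ({0, 15, q + 1, q - 1} : Finset ℕ).card :=
    Finset.card_le_card_of_injOn w (fun k _ => hmem k)
      (fun k _ k' _ h => hinj k k' h)
  have card4 : ({0, 15, q + 1, q - 1} : Finset ℕ).card ≤ 4 := by
    refine le_trans (Finset.card_insert_le _ _) (Nat.succ_le_succ ?_)
    refine le_trans (Finset.card_insert_le _ _) (Nat.succ_le_succ ?_)
    refine le_trans (Finset.card_insert_le _ _) (Nat.succ_le_succ ?_)
    simp
  rw [Finset.card_univ, Fintype.card_fin] at card5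
  omega
end

section
/- Every caterpillar tree T with n vertices admits a bijective labeling of its vertices by {1,…,n} such that the graph distance d(i, i+1) ≤ 2 for all 1 ≤ i < n. Consequently, every admissible path in T (with respect to this labeling) has at most 3 vertices. -/
/-- A caterpillar tree: a tree containing a path (the central path) such that
every vertex is on the path or adjacent to a vertex of the path. -/
def IsCaterpillar {V : Type*} (T : SimpleGraph V) : Prop :=
  T.IsTree ∧ ∃ (u w : V) (p : T.Walk u w), p.IsPath ∧
    ∀ x : V, x ∈ p.support ∨ ∃ y ∈ p.support, T.Adj x y

private lemma chain'_reachable {V : Type*} {G : SimpleGraph V} :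
    ∀ (l : List V), l.Chain' G.Adj → ∀ a b : V, l.head? = some a → l.getLast? = some b →
      G.Reachable a b
  | [], _, a, b, ha, _ => by simp at ha
  | [x], _, a, b, ha, hb => by
      simp at ha hb; subst ha; subst hb; exact SimpleGraph.Reachable.refl _
  | x :: y :: t, hc, a, b, ha, hb => by
      simp only [List.head?_cons, Option.some.injEq] at ha
      subst ha
      unfold List.Chain' at hc
      rw [List.isChain_cons_cons] at hc
      have h2 := chain'_reachable (y :: t) hc.2 y b rfl
        (by rwa [List.getLast?_cons_cons] at hb)
      exact hc.1.reachable.trans h2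

private lemma exists_crossing {P : ℕ → Prop} {a b : ℕ} (hab : a ≤ b) (ha : P a)
    (hb : ¬ P b) : ∃ k, a ≤ k ∧ k < b ∧ P k ∧ ¬ P (k + 1) := by
  by_contra h
  push_neg at h
  apply hb
  have key : ∀ m, a + m ≤ b → P (a + m) := by
    intro m
    induction m with
    | zero => simpa using fun _ => ha
    | succ d ih =>
        intro hle
        have h1 := ih (by omega)
        have h2 := h (a + d) (by omega) (by omega) h1
        have heq : a + (d + 1) = (a + d) + 1 := by omega
        rwa [heq]
  have := key (b - a) (by omega)
  rwa [Nat.add_sub_cancel' hab] at this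

private lemma admissible_short {n : ℕ} {G : SimpleGraph (Fin n)} (hG : G.IsTree)
    (hd : ∀ i j : Fin n, (j : ℕ) = (i : ℕ) + 1 → G.dist i j ≤ 2) :
    ∀ l : List (Fin n), IsAdmissible G l → l.length ≤ 3 := by
  intro l hl
  obtain ⟨i, j, hij, hhead, hlast, ⟨hchain, hnodup⟩, hmid, -⟩ := hl
  by_contra hlen
  push_neg at hlen
  rcases l with _ | ⟨a, l⟩; · simp at hlen
  rcases l with _ | ⟨b, l⟩; · simp at hlen
  rcases l with _ | ⟨c, l⟩; · simp at hlen
  rcases l with _ | ⟨d, l⟩; · simp at hlen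
  -- a = i
  simp only [List.head?_cons, Option.some.injEq] at hhead
  subst hhead
  -- adjacency facts
  unfold List.Chain' at hchain
  rw [List.isChain_cons_cons, List.isChain_cons_cons] at hchain
  obtain ⟨hib, hbc, hchain'⟩ := hchain
  -- nodup facts
  simp only [List.nodup_cons, List.mem_cons, not_or] at hnodup
  obtain ⟨⟨hib', hic', hid'⟩, ⟨hbc', hbd'⟩, hnd⟩ := hnodup
  have hbnotin : b ∉ (c :: d :: l) := by simp [hbc', hbd'.1, hbd'.2]
  -- interior label facts
  have hbmem : b ∈ (b :: c :: d :: l).dropLast := by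
    rw [List.dropLast_cons₂]; exact List.mem_cons_self
  have hcmem : c ∈ (b :: c :: d :: l).dropLast := by
    rw [List.dropLast_cons₂, List.dropLast_cons₂]
    exact List.mem_cons_of_mem _ (List.mem_cons_self)
  have hb2 := hmid b hbmem
  have hc2 := hmid c hcmem
  -- getLast fact
  rw [List.getLast?_cons_cons, List.getLast?_cons_cons] at hlast
  -- the deleted-edge graph
  set G' : SimpleGraph (Fin n) := G \ SimpleGraph.fromEdgeSet {s(b, c)} with hG'
  have hG'adj : ∀ x y : Fin n, G.Adj x y → s(x, y) ≠ s(b, c) → G'.Adj x y := by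
    intro x y hxy hne
    rw [hG', SimpleGraph.sdiff_adj]
    refine ⟨hxy, ?_⟩
    rw [SimpleGraph.fromEdgeSet_adj]
    rintro ⟨h1, -⟩
    exact hne (by simpa using h1)
  have hbridge : ¬ G'.Reachable b c :=
    ((SimpleGraph.isAcyclic_iff_forall_adj_isBridge.mp hG.IsAcyclic hbc))
  -- i reaches b in G'
  have hib2 : G'.Adj a b := by
    apply hG'adj _ _ hib
    intro h
    rw [Sym2.eq_iff] at h
    rcases h with ⟨h1, -⟩ | ⟨h1, -⟩
    exacts [hib' h1, hic' h1]
  -- c reaches j in G'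
  have hcj : G'.Reachable c j := by
    apply chain'_reachable (c :: d :: l) ?_ c j rfl hlast
    have : ∀ (m : List (Fin n)), b ∉ m → m.Chain' G.Adj → m.Chain' G'.Adj := by
      intro m
      induction m with
      | nil => simp [List.Chain']
      | cons p t ih =>
          intro hbm hc
          cases t with
          | nil => simp [List.Chain']
          | cons q t' =>
              unfold List.Chain' at hc ⊢
              rw [List.isChain_cons_cons] at hc ⊢
              simp only [List.mem_cons, not_or] at hbm
              refine ⟨?_, ih (by simp [hbm.2.1, hbm.2.2]) hc.2⟩
              apply hG'adj _ _ hc.1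
              intro h
              rw [Sym2.eq_iff] at h
              rcases h with ⟨h1, -⟩ | ⟨-, h2⟩
              exacts [hbm.1 h1.symm, hbm.2.1 h2.symm]
    exact this _ hbnotin hchain'
  -- i does not reach j in G'
  have hnij : ¬ G'.Reachable a j := by
    intro h
    exact hbridge (hib2.symm.reachable.trans (h.trans hcj.symm))
  -- crossing
  set P : ℕ → Prop := fun m => ∀ h : m < n, G'.Reachable a ⟨m, h⟩ with hP
  have hPi : P (a : ℕ) := fun h => by
    have : (⟨(a : ℕ), h⟩ : Fin n) = a := rfl
    rw [this]
  have hPj : ¬ P (j : ℕ) := by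
    intro h
    exact hnij (by simpa using h j.isLt)
  obtain ⟨k, hk1, hk2, hPk, hPk1⟩ := exists_crossing (le_of_lt hij) hPi hPj
  have hkn : k < n := lt_trans hk2 j.isLt
  have hk1n : k + 1 < n := lt_of_le_of_lt hk2 j.isLt
  obtain ⟨K, hKval⟩ : ∃ K : Fin n, (K : ℕ) = k := ⟨⟨k, hkn⟩, rfl⟩
  obtain ⟨K', hK'val⟩ : ∃ K' : Fin n, (K' : ℕ) = k + 1 := ⟨⟨k + 1, hk1n⟩, rfl⟩
  have hreachK : G'.Reachable a K := by
    have h := hPk hkn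
    have heq : (⟨k, hkn⟩ : Fin n) = K := Fin.ext hKval.symm
    rwa [heq] at h
  have hnreachK' : ¬ G'.Reachable a K' := by
    intro h
    apply hPk1
    intro h'
    have heq : (⟨k + 1, h'⟩ : Fin n) = K' := Fin.ext hK'val.symm
    rw [heq]
    exact h
  -- labels of b and c vs K K'
  have hbK : b ≠ K ∧ b ≠ K' := by
    constructor <;> intro h <;> subst h <;>
      rcases hb2 with h | h <;>
      · have := Fin.lt_iff_val_lt_val.mp h
        omega
  have hcK : c ≠ K ∧ c ≠ K' := by
    constructor <;> intro h <;> subst h <;>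
      rcases hc2 with h | h <;>
      · have := Fin.lt_iff_val_lt_val.mp h
        omega
  -- short walk from K to K'
  have hKdist : G.dist K K' ≤ 2 := hd K K' (by omega)
  obtain ⟨W, hW⟩ := (hG.isConnected.preconnected K K').exists_walk_length_eq_dist
  have hWlen : W.length ≤ 2 := by rw [hW]; exact hKdist
  -- the edge s(b,c) is in W
  have hedge : s(b, c) ∈ W.edges := by
    by_contra hbcW
    have hsub : ∀ e ∈ W.edges, e ∈ G'.edgeSet := by
      intro e he
      have h1 : e ∈ G.edgeSet := W.edges_subset_edgeSet he
      rw [hG', SimpleGraph.edgeSet_sdiff, Set.mem_diff]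
      refine ⟨h1, ?_⟩
      rw [SimpleGraph.edgeSet_fromEdgeSet, Set.mem_diff]
      rintro ⟨h2, -⟩
      simp only [Set.mem_singleton_iff] at h2
      exact hbcW (h2 ▸ he)
    have := (W.transfer G' hsub).reachable
    exact hnreachK' (hreachK.trans this)
  have hbsup : b ∈ W.support := W.fst_mem_support_of_mem_edges hedge
  have hcsup : c ∈ W.support := W.snd_mem_support_of_mem_edges hedge
  -- case on the walk
  clear hW
  rcases W with _ | ⟨hadj1, W⟩
  · simp only [SimpleGraph.Walk.support_nil, List.mem_singleton] at hbsup hcsup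
    exact hbc' (hbsup.trans hcsup.symm)
  · rcases W with _ | ⟨hadj2, W⟩
    · simp only [SimpleGraph.Walk.support_cons, SimpleGraph.Walk.support_nil,
        List.mem_cons, List.mem_singleton, List.not_mem_nil, or_false] at hbsup hcsup
      rcases hbsup with h | h
      · exact hbK.1 h
      · exact hbK.2 h
    · rcases W with _ | ⟨hadj3, W⟩
      · simp only [SimpleGraph.Walk.support_cons, SimpleGraph.Walk.support_nil,
          List.mem_cons, List.mem_singleton, List.not_mem_nil, or_false] at hbsup hcsup
        rcases hbsup with h | h | h
        · exact hbK.1 h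
        · rcases hcsup with h' | h' | h'
          · exact hcK.1 h'
          · exact hbc' (h.trans h'.symm)
          · exact hcK.2 h'
        · exact hbK.2 h
      · simp only [SimpleGraph.Walk.length_cons] at hWlen
        omega


private lemma iso_dist_le {V W : Type*} {G : SimpleGraph V} {G' : SimpleGraph W}
    (φ : G ≃g G') (u v : V) : G'.dist (φ u) (φ v) ≤ G.dist u v := by
  by_cases h : G.Reachable u v
  · obtain ⟨p, hp⟩ := h.exists_walk_length_eq_dist
    calc G'.dist (φ u) (φ v) ≤ (p.map φ.toHom).length := SimpleGraph.dist_le _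
      _ = p.length := p.length_map _
      _ = G.dist u v := hp
  · have h' : ¬ G'.Reachable (φ u) (φ v) := by
      rwa [SimpleGraph.Iso.reachable_iff]
    rw [SimpleGraph.dist_eq_zero_of_not_reachable h,
      SimpleGraph.dist_eq_zero_of_not_reachable h']

private lemma iso_isTree {V W : Type*} {G : SimpleGraph V} {G' : SimpleGraph W}
    (φ : G ≃g G') (h : G.IsTree) : G'.IsTree := by
  constructor
  · exact φ.connected_iff.mp h.isConnected
  · intro v c hc
    have hinj : Function.Injective (φ.symm.toHom : W → V) := φ.symm.toEquiv.injective
    exact h.IsAcyclic (c.map φ.symm.toHom)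
      ((SimpleGraph.Walk.map_isCycle_iff_of_injective hinj).mpr hc)

private lemma caterpillar_list {V : Type*} [Fintype V] (T : SimpleGraph V)
    (hT : IsCaterpillar T) :
    ∃ L : List V, L.Nodup ∧ (∀ x, x ∈ L) ∧ L.Chain' (fun x y => T.dist x y ≤ 2) := by
  classical
  obtain ⟨htree, u, w, p, hp, hcov⟩ := hT
  set S := p.support with hSdef
  have hSnd : S.Nodup := hp.support_nodup
  have hchain : List.Chain' T.Adj S := p.isChain_adj_support
  have hD1 : ∀ x y : V, T.Adj x y → T.dist x y ≤ 2 := by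
    intro x y h
    have h1 := SimpleGraph.dist_le (SimpleGraph.Walk.cons h SimpleGraph.Walk.nil)
    simp at h1; omega
  have hD2 : ∀ x y z : V, T.Adj x z → T.Adj z y → T.dist x y ≤ 2 := by
    intro x y z h1 h2
    have h3 := SimpleGraph.dist_le
      (SimpleGraph.Walk.cons h1 (SimpleGraph.Walk.cons h2 SimpleGraph.Walk.nil))
    simpa using h3
  have hex : ∀ x : V, ∃ y : V, x ∉ S → (y ∈ S ∧ T.Adj x y) := by
    intro x
    by_cases hx : x ∈ S
    · exact ⟨x, fun h => absurd hx h⟩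
    · rcases hcov x with h | ⟨y, hy, hadj⟩
      · exact absurd h hx
      · exact ⟨y, fun _ => ⟨hy, hadj⟩⟩
  choose f hfspec using hex
  set blk : V → List V :=
    fun s => (Finset.univ.filter (fun x => x ∉ S ∧ f x = s)).toList ++ [s] with hblk
  have hmem_blk : ∀ s v : V, v ∈ blk s ↔ (v ∉ S ∧ f v = s) ∨ v = s := by
    intro s v
    simp [hblk, Finset.mem_toList, Finset.mem_filter]
  have hblk_ne : ∀ s : V, blk s ≠ [] := by
    intro s
    simp [hblk]
  refine ⟨S.flatMap blk, ?_, ?_, ?_⟩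
  · rw [List.nodup_flatMap]
    constructor
    · intro s hs
      rw [hblk, List.nodup_append]
      refine ⟨Finset.nodup_toList _, List.nodup_singleton _, ?_⟩
      intro v hv
      simp only [Finset.mem_toList, Finset.mem_filter] at hv
      simp only [List.mem_singleton]
      intro _ rfl hvs
      exact hv.2.1 (hvs ▸ hs)
    · have h := hSnd
      rw [List.Nodup] at h
      refine h.imp_of_mem ?_
      intro s s' hs hs' hne
      intro v hv hv'
      rw [hmem_blk] at hv hv'
      rcases hv with ⟨hvS, hvf⟩ | rfl
      · rcases hv' with ⟨hvS', hvf'⟩ | rfl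
        · exact hne (hvf ▸ hvf')
        · exact hvS hs'
      · rcases hv' with ⟨hvS', hvf'⟩ | h'
        · exact hvS' hs
        · exact hne h'
  · intro x
    rw [List.mem_flatMap]
    by_cases hx : x ∈ S
    · exact ⟨x, hx, (hmem_blk x x).mpr (Or.inr rfl)⟩
    · obtain ⟨hfS, hfadj⟩ := hfspec x hx
      exact ⟨f x, hfS, (hmem_blk (f x) x).mpr (Or.inl ⟨hx, rfl⟩)⟩
  · have hjoin : S.flatMap blk = (S.map blk).flatten := by
      simp [List.flatMap]
    rw [hjoin]
    unfold List.Chain'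
    rw [List.isChain_flatten ?_]
    · constructor
      · intro l hl
        simp only [List.mem_map] at hl
        obtain ⟨s, hs, rfl⟩ := hl
        rw [hblk]
        rw [List.isChain_append]
        refine ⟨?_, List.isChain_singleton _, ?_⟩
        · apply List.Pairwise.isChain
          apply List.pairwise_of_forall_mem_list
          intro x hx y hy
          simp only [Finset.mem_toList, Finset.mem_filter] at hx hy
          exact hD2 x y s (hx.2.2 ▸ hfspec x hx.2.1 |>.2) ((hy.2.2 ▸ hfspec y hy.2.1 |>.2).symm)
        · intro x hx y hy
          simp only [List.head?_cons, Option.mem_def, Option.some.injEq] at hy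
          subst hy
          have hx' := List.mem_of_mem_getLast? hx
          simp only [Finset.mem_toList, Finset.mem_filter] at hx'
          exact hD1 x s (hx'.2.2 ▸ (hfspec x hx'.2.1).2)
      · rw [List.isChain_map]
        refine hchain.imp ?_
        intro s s' hss'
        intro x hx y hy
        have hx' : x = s := by
          rw [hblk, List.getLast?_concat, Option.mem_def, Option.some.injEq] at hx
          exact hx.symm
        subst hx'
        have hy' := List.mem_of_mem_head? hy
        rw [hmem_blk] at hy'
        rcases hy' with ⟨hyS, hyf⟩ | rfl
        · exact hD2 x y s' hss' ((hyf ▸ (hfspec y hyS).2).symm)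
        · exact hD1 x y hss'
    · intro h
      simp only [List.mem_map] at h
      obtain ⟨s, -, hs⟩ := h
      exact hblk_ne s hs


/-- Every caterpillar tree with `n` vertices admits a labeling by `{1,…,n}`
with `d(i, i+1) ≤ 2` for all `1 ≤ i < n`; consequently, with respect to this
labeling every admissible path has at most 3 vertices. -/
theorem caterpillar_labeling {V : Type*} [Fintype V] {n : ℕ}
    (T : SimpleGraph V) (hT : IsCaterpillar T) (hcard : Fintype.card V = n) :
    ∃ e : V ≃ Fin n,
      (∀ i j : Fin n, (j : ℕ) = (i : ℕ) + 1 → (T.map e.toEmbedding).dist i j ≤ 2) ∧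
      (∀ l : List (Fin n), IsAdmissible (T.map e.toEmbedding) l → l.length ≤ 3) := by
  classical
  obtain ⟨L, hnd, hmemL, hchainL⟩ := caterpillar_list T hT
  have hlenV : L.length = Fintype.card V := by
    have h := Fintype.card_congr (hnd.getEquivOfForallMemList L hmemL)
    simpa using h
  have hlen : L.length = n := hlenV.trans hcard
  set e0 := hnd.getEquivOfForallMemList L hmemL with he0
  set e : V ≃ Fin n := e0.symm.trans (finCongr hlen) with he
  have hsym : ∀ (m : ℕ) (hm : m < n), e.symm ⟨m, hm⟩ = L.get ⟨m, by omega⟩ := by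
    intro m hm
    rfl
  have hdist : ∀ i j : Fin n, (j : ℕ) = (i : ℕ) + 1 → (T.map e.toEmbedding).dist i j ≤ 2 := by
    intro i j hji
    have h1 : (T.map e.toEmbedding).dist i j
        = (T.map e.toEmbedding).dist (e (e.symm i)) (e (e.symm j)) := by
      rw [e.apply_symm_apply, e.apply_symm_apply]
    rw [h1]
    refine le_trans (iso_dist_le (SimpleGraph.Iso.map e T) (e.symm i) (e.symm j)) ?_
    have hin : (i : ℕ) < L.length - 1 := by
      have := j.isLt
      omega
    have hbound := List.isChain_iff_getElem.mp hchainL (i : ℕ) (by omega)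
    have hei : e.symm i = L.get ⟨(i : ℕ), by omega⟩ := by
      have := hsym (i : ℕ) i.isLt
      simpa using this
    have hej : e.symm j = L.get ⟨(i : ℕ) + 1, by omega⟩ := by
      have h2 := hsym (j : ℕ) j.isLt
      have h3 : (⟨(j : ℕ), j.isLt⟩ : Fin n) = j := rfl
      rw [h3] at h2
      rw [h2]
      congr 1
      exact Fin.ext hji
    rw [hei, hej]
    exact hbound
  have htree' : (T.map e.toEmbedding).IsTree := iso_isTree (SimpleGraph.Iso.map e T) hT.1
  exact ⟨e, hdist, admissible_short htree' hdist⟩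
end

section
/- Let T be a caterpillar tree with n vertices and central path v_1, …, v_ℓ, and let v be any vertex of the central path. Then there exists a bijective labeling of the vertices of T by {1,…,n} such that v receives label 1 and d(i, i+1) ≤ 2 for all 1 ≤ i < n, where d denotes graph distance. -/
open List

section Aux

variable {V : Type*}

def Rel2 (T : SimpleGraph V) (a b : V) : Prop := ∃ w : T.Walk a b, w.length ≤ 2
lemma rel2_of_adj {T : SimpleGraph V} {a b : V} (h : T.Adj a b) : Rel2 T a b :=
  ⟨.cons h .nil, by simp⟩
lemma rel2_two {T : SimpleGraph V} {a c b : V} (h1 : T.Adj a c) (h2 : T.Adj c b) :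
    Rel2 T a b :=
  ⟨.cons h1 (.cons h2 .nil), by simp⟩
def PQ (F : V → List V) : Bool → List V → List V
  | _, [] => []
  | true, s :: tl => s :: (PQ F false tl ++ F s)
  | false, s :: tl => F s ++ (PQ F true tl ++ [s])

lemma PQ_perm (F : V → List V) (σ : List V) (b : Bool) :
    PQ F b σ ~ σ ++ σ.flatMap F := by
  classical
  induction σ generalizing b with
  | nil => cases b <;> simp [PQ]
  | cons s tl ih =>
    rw [List.perm_iff_count]
    intro x
    cases b <;>
      simp [PQ, List.count_append, ((ih _).count_eq x), List.count_cons] <;> ring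

lemma chain'_rel2_of_center {T : SimpleGraph V} {s : V} {l : List V}
    (h : ∀ x ∈ l, T.Adj s x) : l.IsChain (Rel2 T) := by
  induction l with
  | nil => simp
  | cons a l ih =>
    rw [List.isChain_cons]
    refine ⟨fun y hy => ?_, ih fun x hx => h x (mem_cons_of_mem a hx)⟩
    exact rel2_two (h a mem_cons_self).symm (h y (mem_cons_of_mem a (mem_of_mem_head? hy)))

lemma PQ_ne_nil_false (F : V → List V) (s : V) (tl : List V) :
    PQ F false (s :: tl) ≠ [] := by
  simp only [PQ]
  intro h
  have := congrArg List.length h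
  simp at this

lemma getLast?_cons' {α : Type*} (a : α) {l : List α} (h : l ≠ []) :
    (a :: l).getLast? = l.getLast? := by
  have : a :: l = [a] ++ l := rfl
  rw [this, List.getLast?_append_of_ne_nil _ h]

lemma PQ_getLast?_false (F : V → List V) (s : V) (tl : List V) :
    (PQ F false (s :: tl)).getLast? = some s := by
  simp only [PQ]
  rw [List.getLast?_append_of_ne_nil, List.getLast?_append_of_ne_nil] <;> simp

lemma PQ_good (T : SimpleGraph V) (F : V → List V) (σ : List V)
    (hc : σ.IsChain T.Adj) (hF : ∀ s ∈ σ, ∀ x ∈ F s, T.Adj s x) :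
    ((PQ F true σ).IsChain (Rel2 T) ∧
      ∀ s tl, σ = s :: tl → ∀ x, (PQ F true σ).getLast? = some x →
        ∀ t, T.Adj s t → Rel2 T x t) ∧
    ((PQ F false σ).IsChain (Rel2 T) ∧
      ∀ s tl, σ = s :: tl →
        ∀ x, (PQ F false σ).head? = some x → ∀ t, T.Adj t s → Rel2 T t x) := by
  induction σ with
  | nil => simp [PQ]
  | cons s tl ih =>
    have hc' : tl.IsChain T.Adj := hc.tail
    have hF' : ∀ s' ∈ tl, ∀ x ∈ F s', T.Adj s' x :=
      fun s' hs' => hF s' (mem_cons_of_mem s hs')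
    obtain ⟨⟨ihTc, ihTl⟩, ⟨ihFc, ihFh⟩⟩ := ih hc' hF'
    have hFs : ∀ x ∈ F s, T.Adj s x := hF s mem_cons_self
    -- adjacency of s with head of tl
    have hadj : ∀ s' tl', tl = s' :: tl' → T.Adj s s' := by
      intro s' tl' h; subst h
      exact (List.isChain_cons_cons.mp hc).1
    constructor
    · -- TRUE case: s :: (PQ F false tl ++ F s)
      constructor
      · show (s :: (PQ F false tl ++ F s)).IsChain (Rel2 T)
        rw [List.isChain_cons]
        constructor
        · intro y hy
          cases tl with
          | nil =>
            simp only [PQ, nil_append] at hy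
            exact rel2_of_adj (hFs y (mem_of_mem_head? hy))
          | cons s' tl' =>
            rw [List.head?_append_of_ne_nil _ (PQ_ne_nil_false F s' tl')] at hy
            exact ihFh s' tl' rfl y hy s (hadj s' tl' rfl)
        · rw [List.isChain_append]
          refine ⟨ihFc, chain'_rel2_of_center hFs, ?_⟩
          intro x hx y hy
          cases tl with
          | nil => simp [PQ] at hx
          | cons s' tl' =>
            rw [PQ_getLast?_false] at hx
            injection hx with hxe
            subst hxe
            exact rel2_two (hadj s' tl' rfl).symm (hFs y (mem_of_mem_head? hy))
      · intro s₀ tl₀ heq x hx t hadjt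
        injection heq with h1 h2
        subst h1; subst h2
        show Rel2 T x t
        rcases eq_or_ne (F s) [] with hFe | hFe
        · cases tl with
          | nil =>
            simp [PQ, hFe] at hx
            cases hx
            exact rel2_of_adj hadjt
          | cons s' tl' =>
            have : (PQ F true (s :: (s' :: tl'))).getLast? = some s' := by
              show (s :: (PQ F false (s' :: tl') ++ F s)).getLast? = some s'
              rw [hFe, append_nil, getLast?_cons' _ (PQ_ne_nil_false F s' tl'),
                PQ_getLast?_false]
            rw [this] at hx
            injection hx with hxe
            subst hxe
            exact rel2_two (hadj s' tl' rfl).symm hadjt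
        · have : (PQ F true (s :: tl)).getLast? = (F s).getLast? := by
            show (s :: (PQ F false tl ++ F s)).getLast? = _
            rw [getLast?_cons' _ (by
              intro h
              exact hFe (append_eq_nil_iff.mp h).2), List.getLast?_append_of_ne_nil _ hFe]
          rw [this] at hx
          exact rel2_two (hFs x (mem_of_mem_getLast? hx)).symm hadjt
    · -- FALSE case: F s ++ (PQ F true tl ++ [s])
      constructor
      · show (F s ++ (PQ F true tl ++ [s])).IsChain (Rel2 T)
        rw [List.isChain_append]
        refine ⟨chain'_rel2_of_center hFs, ?_, ?_⟩
        · rw [List.isChain_append]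
          refine ⟨ihTc, by simp, ?_⟩
          intro x hx y hy
          simp only [head?_cons, Option.mem_def, Option.some.injEq] at hy
          subst hy
          cases tl with
          | nil => simp [PQ] at hx
          | cons s' tl' =>
            exact ihTl s' tl' rfl x hx s (hadj s' tl' rfl).symm
        · intro x hx y hy
          have hxm : x ∈ F s := mem_of_mem_getLast? hx
          cases tl with
          | nil =>
            simp only [PQ, nil_append, head?_cons, Option.mem_def, Option.some.injEq] at hy
            subst hy
            exact rel2_of_adj (hFs x hxm).symm
          | cons s' tl' =>
            have : (PQ F true (s' :: tl') ++ [s]).head? = some s' := by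
              show ((s' :: _) ++ [s]).head? = some s'
              rfl
            rw [this] at hy
            injection hy with hye
            subst hye
            exact rel2_two (hFs x hxm).symm (hadj s' tl' rfl)
      · intro s₀ tl₀ heq x hx t hadjt
        injection heq with h1 h2
        subst h1; subst h2
        show Rel2 T t x
        rcases eq_or_ne (F s) [] with hFe | hFe
        · cases tl with
          | nil =>
            simp [PQ, hFe] at hx
            cases hx
            exact rel2_of_adj hadjt
          | cons s' tl' =>
            have : (PQ F false (s :: (s' :: tl'))).head? = some s' := by
              show (F s ++ (PQ F true (s' :: tl') ++ [s])).head? = some s'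
              rw [hFe]; rfl
            rw [this] at hx
            injection hx with hxe
            subst hxe
            exact rel2_two hadjt (hadj s' tl' rfl)
        · have : (PQ F false (s :: tl)).head? = (F s).head? := by
            show (F s ++ (PQ F true tl ++ [s])).head? = _
            rw [List.head?_append_of_ne_nil _ hFe]
          rw [this] at hx
          exact rel2_two hadjt (hFs x (mem_of_mem_head? hx))

end Aux



/-- A caterpillar tree with `n` vertices, central path `p`, and a vertex `v`
of the central path admits a labeling by `{1,…,n}` assigning label `1`
(here `0 : Fin n`) to `v` such that `d(i, i+1) ≤ 2` for all `1 ≤ i < n`. -/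
theorem caterpillar_labeling_first_vertex {V : Type*} [Fintype V] {n : ℕ}
    (T : SimpleGraph V) (hT : T.IsTree) (hcard : Fintype.card V = n)
    (u w : V) (p : T.Walk u w) (hp : p.IsPath)
    (hcover : ∀ x : V, x ∈ p.support ∨ ∃ y ∈ p.support, T.Adj x y)
    (v : V) (hv : v ∈ p.support) :
    ∃ e : V ≃ Fin n, (e v : ℕ) = 0 ∧
      ∀ i j : Fin n, (j : ℕ) = (i : ℕ) + 1 → (T.map e.toEmbedding).dist i j ≤ 2 := by
  classical
  have hg : ∀ x : V, ∃ y, x ∉ p.support → y ∈ p.support ∧ T.Adj x y := by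
    intro x
    by_cases hx : x ∈ p.support
    · exact ⟨x, fun h => absurd hx h⟩
    · rcases hcover x with h | ⟨y, hy, hxy⟩
      · exact absurd h hx
      · exact ⟨y, fun _ => ⟨hy, hxy⟩⟩
  choose g hgspec using hg
  set F : V → List V :=
    fun s => (Finset.univ.filter (fun x => x ∉ p.support ∧ g x = s)).toList with hF
  have hFmem : ∀ s x, x ∈ F s ↔ (x ∉ p.support ∧ g x = s) := by
    intro s x; simp [hF]
  have hFadj : ∀ s, ∀ x ∈ F s, T.Adj s x := by
    intro s x hx
    rw [hFmem] at hx
    have := (hgspec x hx.1).2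
    rw [hx.2] at this
    exact this.symm
  have hFnotsup : ∀ s, ∀ x ∈ F s, x ∉ p.support := by
    intro s x hx; exact ((hFmem s x).mp hx).1
  have hFnodup : ∀ s, (F s).Nodup := fun s => Finset.nodup_toList _
  obtain ⟨l1, l2, hsplit⟩ := List.append_of_mem hv
  set S1 : List V := v :: l2 with hS1
  set S2 : List V := l1.reverse with hS2
  have hchainsup : p.support.IsChain T.Adj := p.isChain_adj_support
  have hnodupsup : p.support.Nodup := hp.support_nodup
  rw [hsplit] at hchainsup
  obtain ⟨hchain1, hchain2, hjun⟩ := List.isChain_append.mp hchainsup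
  have hchainS2 : S2.IsChain T.Adj :=
    List.isChain_reverse.mpr (hchain1.imp fun a b h => h.symm)
  obtain ⟨⟨hPc1, hPl1⟩, -⟩ := PQ_good T F S1 hchain2 (fun s _ => hFadj s)
  obtain ⟨⟨hPc2, -⟩, -⟩ := PQ_good T F S2 hchainS2 (fun s _ => hFadj s)
  set L : List V := PQ F true S1 ++ PQ F true S2 with hL
  -- the chain property
  have hchainL : L.IsChain (Rel2 T) := by
    rw [hL, List.isChain_append]
    refine ⟨hPc1, hPc2, ?_⟩
    intro x hx y hy
    rcases hl1 : l1.reverse with _ | ⟨t, rest⟩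
    · rw [hS2] at hy
      rw [hl1] at hy
      simp [PQ] at hy
    · have hheadt : (PQ F true S2).head? = some t := by
        rw [hS2, hl1]; rfl
      rw [hheadt] at hy
      injection hy with hye
      subst hye
      have htlast : l1.getLast? = some t := by
        rw [← List.head?_reverse, hl1]; rfl
      have hadjvt : T.Adj v t := (hjun t htlast v rfl).symm
      exact hPl1 v l2 rfl x hx t hadjvt
  -- permutation facts
  have hpermL : L ~ p.support ++ p.support.flatMap F := by
    have h1 : L ~ (S1 ++ S1.flatMap F) ++ (S2 ++ S2.flatMap F) :=
      (PQ_perm F S1 true).append (PQ_perm F S2 true)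
    have hperm3 : S1 ++ S2 ~ p.support := by
      rw [hsplit]
      calc S1 ++ S2 ~ S1 ++ l1 := Perm.append_left _ (List.reverse_perm l1)
        _ ~ l1 ++ S1 := List.perm_append_comm
    have h2 : (S1 ++ S1.flatMap F) ++ (S2 ++ S2.flatMap F) ~
        (S1 ++ S2) ++ ((S1 ++ S2).flatMap F) := by
      rw [List.perm_iff_count]
      intro x
      simp [List.count_append]
      ring
    exact h1.trans (h2.trans (hperm3.append (hperm3.flatMap_right F)))
  have hnodupR : (p.support ++ p.support.flatMap F).Nodup := by
    rw [List.nodup_append]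
    refine ⟨hnodupsup, ?_, ?_⟩
    · rw [List.nodup_flatMap]
      refine ⟨fun s _ => hFnodup s, ?_⟩
      refine hnodupsup.imp ?_
      intro s s' hne a ha ha'
      have h1 := (hFmem s a).mp ha
      have h2 := (hFmem s' a).mp ha'
      exact hne (h1.2 ▸ h2.2 ▸ rfl)
    · intro a ha b hb hab
      rw [← hab, List.mem_flatMap] at hb
      obtain ⟨s, -, has⟩ := hb
      exact hFnotsup s a has ha
  have hnodupL : L.Nodup := hpermL.nodup_iff.mpr hnodupR
  have hcomplete : ∀ x : V, x ∈ L := by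
    intro x
    rw [hpermL.mem_iff]
    by_cases hx : x ∈ p.support
    · exact List.mem_append.mpr (Or.inl hx)
    · refine List.mem_append.mpr (Or.inr ?_)
      rw [List.mem_flatMap]
      exact ⟨g x, (hgspec x hx).1, (hFmem _ x).mpr ⟨hx, rfl⟩⟩
  have hlen : L.length = n := by
    have h1 : L.toFinset = Finset.univ := by
      ext x; simp [hcomplete x]
    have h2 := List.toFinset_card_of_nodup hnodupL
    rw [h1, Finset.card_univ, hcard] at h2
    omega
  set E : Fin L.length ≃ V := hnodupL.getEquivOfForallMemList L hcomplete with hE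
  have key : ∀ (k : ℕ) (hk : k < L.length),
      ((E.symm.trans (finCongr hlen)) (L.get ⟨k, hk⟩) : ℕ) = k := by
    intro k hk
    have hEk : E ⟨k, hk⟩ = L.get ⟨k, hk⟩ := by
      rw [hE]; simp [List.Nodup.getEquivOfForallMemList]
    rw [← hEk]
    simp
  refine ⟨E.symm.trans (finCongr hlen), ?_, ?_⟩
  · -- label of v is 0
    have hLv : L = v :: ((PQ F false l2 ++ F v) ++ PQ F true S2) := by
      rw [hL, hS1]; rfl
    have h0 : 0 < L.length := by
      rw [hlen, ← hcard]
      exact Fintype.card_pos_iff.mpr ⟨v⟩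
    have hv0 : L.get ⟨0, h0⟩ = v := by
      rw [List.get_of_eq hLv]
      rfl
    rw [← hv0]
    exact key 0 h0
  · intro i j hij
    have hi : (i : ℕ) + 1 < L.length := by rw [hlen, ← hij]; exact j.isLt
    have main : ∀ (a b : V), Rel2 T a b → ∀ (i' j' : Fin n),
        (E.symm.trans (finCongr hlen)) a = i' → (E.symm.trans (finCongr hlen)) b = j' →
        (T.map (E.symm.trans (finCongr hlen)).toEmbedding).dist i' j' ≤ 2 := by
      rintro a b ⟨w, hw⟩ i' j' rfl rfl
      let e : V ≃ Fin n := E.symm.trans (finCongr hlen)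
      let f : T →g T.map e.toEmbedding :=
        ⟨fun x => e x, fun {x y} h =>
          (SimpleGraph.map_adj e.toEmbedding T _ _).mpr ⟨x, y, h, rfl, rfl⟩⟩
      have h2 := SimpleGraph.dist_le (w.map f)
      rw [SimpleGraph.Walk.length_map] at h2
      exact le_trans h2 hw
    refine main _ _ (List.isChain_iff_getElem.mp hchainL i (by omega)) i j ?_ ?_
    · exact Fin.ext (key i (by omega))
    · refine Fin.ext ?_
      rw [show L[(i : ℕ) + 1] = L.get ⟨(i : ℕ) + 1, by omega⟩ from rfl, key ((i : ℕ) + 1) (by omega)]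
      omega
end

section
/- Let T be a caterpillar tree with central path v_1, …, v_ℓ (ℓ ≥ 3) and let S be a nonempty subset of the vertices of T. Define c(S) as the number of connected components of the induced subgraph of T on V(T) ∖ S. Then c(S∖{v}) < c(S) for every v ∈ S if and only if S = {v_{i_1}, …, v_{i_k}} with 1 < i_1 < ⋯ < i_k < ℓ and: whenever deg(v_{i_j}) = 2, both path-neighbors v_{i_j − 1} and v_{i_j + 1} of v_{i_j} on the central path do not belong to S; and whenever deg(v_{i_j}) = 3, at least one of v_{i_j − 1}, v_{i_j + 1} does not belong to S. -/
open SimpleGraph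

section Helpers

variable {V : Type*} [Fintype V] [DecidableEq V] {T : SimpleGraph V} [DecidableRel T.Adj]

lemma reach_down {s t : Set V} (hst : s ⊆ t) :
    ∀ {x y : ↑t} (W : (T.induce t).Walk x y) (hW : ∀ z ∈ W.support, z.1 ∈ s),
      (T.induce s).Reachable ⟨x.1, hW x W.start_mem_support⟩ ⟨y.1, hW y W.end_mem_support⟩ := by
  intro x y W
  induction W with
  | nil => intro hW; rfl
  | cons h W ih =>
    intro hW
    rename_i a b c
    have hb : (b : V) ∈ s := hW b (by simp)
    have ha : (a : V) ∈ s := hW a (by simp)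
    have hadj : (T.induce s).Adj ⟨a.1, ha⟩ ⟨b.1, hb⟩ := h
    exact (hadj.reachable).trans (ih (fun z hz => hW z (by simp [hz])))

lemma acyclic_two_nbrs (hT : T.IsAcyclic) {v x y : V} (hx : T.Adj v x) (hy : T.Adj v y)
    (hxy : x ≠ y) (W : T.Walk x y) (hv : v ∉ W.support) : False := by
  have hvq : v ∉ (W.toPath : T.Walk x y).support := fun h => hv (W.support_toPath_subset h)
  have h2 : (Walk.cons hx.symm (Walk.cons hy Walk.nil) : T.Walk x y).IsPath := by
    simp [Walk.cons_isPath_iff, hxy, hx.ne', hy.ne]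
  have := isAcyclic_iff_path_unique.mp hT W.toPath ⟨_, h2⟩
  apply hvq
  rw [this]
  simp

lemma count_step (hT : T.IsAcyclic) (S : Finset V) {v : V} (hv : v ∈ S) :
    Nat.card ((T.induce ((↑S : Set V)ᶜ)).ConnectedComponent) + 1
      = Nat.card ((T.induce ((↑(S.erase v) : Set V)ᶜ)).ConnectedComponent)
        + (T.neighborFinset v \ S).card := by
  classical
  set sS : Set V := (↑S : Set V)ᶜ with hsS
  set sA : Set V := (↑(S.erase v) : Set V)ᶜ with hsA
  have hmemS : ∀ x, x ∈ sS ↔ x ∉ S := fun x => Iff.rfl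
  have hmemA : ∀ x, x ∈ sA ↔ (x = v ∨ x ∉ S) := by
    intro x; simp only [hsA, Set.mem_compl_iff, Finset.coe_erase, Set.mem_diff,
      Finset.mem_coe, Set.mem_singleton_iff]; tauto
  have hsub : sS ⊆ sA := fun x hx => (hmemA x).2 (Or.inr ((hmemS x).1 hx))
  have hvA : v ∈ sA := (hmemA v).2 (Or.inl rfl)
  have hvS : v ∉ sS := fun h => ((hmemS v).1 h) hv
  set GS := T.induce sS with hGS
  set GA := T.induce sA with hGA
  let ι : GS →g GA := ⟨fun x => ⟨x.1, hsub x.2⟩, fun h => h⟩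
  let emb : GS →g T := ⟨Subtype.val, fun h => h⟩
  let φ : GS.ConnectedComponent → GA.ConnectedComponent := ConnectedComponent.map ι
  let Cv : GA.ConnectedComponent := GA.connectedComponentMk ⟨v, hvA⟩
  -- workhorse
  have Lstar : ∀ (z : V) (hz : z ∈ sS), GA.Reachable ⟨z, hsub hz⟩ ⟨v, hvA⟩ →
      ∃ (b : V) (hb : b ∈ sS), T.Adj v b ∧ GS.Reachable ⟨b, hb⟩ ⟨z, hz⟩ := by
    intro z hz hreach
    obtain ⟨W⟩ := hreach.symm
    have hq := W.toPath.2
    have hne : (⟨v, hvA⟩ : ↑sA) ≠ ⟨z, hsub hz⟩ := by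
      intro h; exact ((hmemS z).1 hz) (by cases h; exact hv)
    obtain ⟨b, hadj, q', hq'eq⟩ := Walk.exists_eq_cons_of_ne hne (W.toPath : GA.Walk _ _)
    rw [hq'eq, Walk.cons_isPath_iff] at hq
    have hsupp : ∀ z' ∈ q'.support, (z' : V) ∈ sS := by
      intro z' hz'
      have hz'A : (z' : V) ∈ sA := z'.2
      have : (z' : V) ≠ v := by
        intro h
        apply hq.2
        have : z' = (⟨v, hvA⟩ : ↑sA) := Subtype.ext h
        rwa [this] at hz'
      rcases (hmemA z').1 hz'A with h | h
      · exact absurd h this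
      · exact (hmemS z').2 h
    have hWb := reach_down hsub q' hsupp
    refine ⟨b, hsupp b q'.start_mem_support, hadj, ?_⟩
    convert hWb using 2
  -- the predicate: C contains a neighbor of v
  set P : GS.ConnectedComponent → Prop :=
    fun C => ∃ b : {x : V // x ∈ sS}, T.Adj v b.1 ∧ GS.connectedComponentMk b = C with hP
  have hφCv : ∀ C, ¬ P C → φ C ≠ Cv := by
    intro C
    induction C using SimpleGraph.ConnectedComponent.ind with | _ z => ?_
    intro hPC heq
    have : GA.Reachable ⟨z.1, hsub z.2⟩ ⟨v, hvA⟩ := by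
      rw [show φ (GS.connectedComponentMk z) = GA.connectedComponentMk (ι z) from
        ConnectedComponent.map_mk ι z] at heq
      exact ConnectedComponent.exact heq
    obtain ⟨b, hb, hadj, hr⟩ := Lstar z.1 z.2 this
    exact hPC ⟨⟨b, hb⟩, hadj, ConnectedComponent.sound (by convert hr using 2)⟩
  let g : GS.ConnectedComponent →
      ({D : GA.ConnectedComponent // D ≠ Cv} ⊕ {x : V // x ∈ T.neighborFinset v \ S}) :=
    fun C => if h : P C then
        Sum.inr ⟨h.choose.1, by
          rcases h.choose_spec with ⟨hadj, _⟩
          simp only [Finset.mem_sdiff, mem_neighborFinset]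
          exact ⟨hadj, (hmemS _).1 h.choose.2⟩⟩
      else Sum.inl ⟨φ C, hφCv C h⟩
  have hbij : Function.Bijective g := by
    constructor
    · intro C1 C2 hg
      simp only [g] at hg
      by_cases h1 : P C1 <;> by_cases h2 : P C2
      · -- both inr
        rw [dif_pos h1, dif_pos h2] at hg
        injection hg with hval'
        have hval := congrArg Subtype.val hval'
        have hb12 : h1.choose = h2.choose := Subtype.ext hval
        rw [← h1.choose_spec.2, ← h2.choose_spec.2, hb12]
      · rw [dif_pos h1, dif_neg h2] at hg; exact absurd hg (by simp)
      · rw [dif_neg h1, dif_pos h2] at hg; exact absurd hg (by simp)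
      · -- both inl
        rw [dif_neg h1, dif_neg h2] at hg
        injection hg with hval'
        have hφ : φ C1 = φ C2 := congrArg Subtype.val hval'
        clear hval'
        induction C1 using SimpleGraph.ConnectedComponent.ind with | _ z1 => ?_
        induction C2 using SimpleGraph.ConnectedComponent.ind with | _ z2 => ?_
        rw [show φ (GS.connectedComponentMk z1) = GA.connectedComponentMk (ι z1) from
          ConnectedComponent.map_mk ι z1,
          show φ (GS.connectedComponentMk z2) = GA.connectedComponentMk (ι z2) from
          ConnectedComponent.map_mk ι z2] at hφ
        obtain ⟨W⟩ := ConnectedComponent.exact hφ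
        set q := (W.toPath : GA.Walk (ι z1) (ι z2)) with hqdef
        by_cases hvq : ∀ z' ∈ q.support, (z' : V) ≠ v
        · have hsupp : ∀ z' ∈ q.support, (z' : V) ∈ sS := by
            intro z' hz'
            rcases (hmemA z'.1).1 z'.2 with h | h
            · exact absurd h (hvq z' hz')
            · exact (hmemS _).2 h
          have := reach_down hsub q hsupp
          apply ConnectedComponent.sound
          convert this using 2 <;> exact rfl
        · push_neg at hvq
          obtain ⟨z0, hz0mem, hz0v⟩ := hvq
          exfalso
          apply h1
          have hz0 : z0 = (⟨v, hvA⟩ : ↑sA) := Subtype.ext hz0v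
          rw [hz0] at hz0mem
          have hreach : GA.Reachable (ι z1) ⟨v, hvA⟩ := ⟨q.takeUntil _ hz0mem⟩
          obtain ⟨b, hb, hadj, hr⟩ := Lstar z1.1 z1.2 (by convert hreach using 2 <;> rfl)
          exact ⟨⟨b, hb⟩, hadj, ConnectedComponent.sound (by convert hr using 2)⟩
    · intro D
      rcases D with ⟨D, hD⟩ | ⟨b, hb⟩
      · obtain ⟨z, hzD⟩ := D.exists_rep
        have hzD : GA.connectedComponentMk z = D := hzD
        subst hzD
        have hzv : (z : V) ≠ v := by
          intro h
          exact hD (ConnectedComponent.sound (by rw [show z = (⟨v, hvA⟩ : ↑sA) from Subtype.ext h]))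
        have hzS : (z : V) ∈ sS := by
          rcases (hmemA z.1).1 z.2 with h | h
          · exact absurd h hzv
          · exact (hmemS _).2 h
        refine ⟨GS.connectedComponentMk ⟨z.1, hzS⟩, ?_⟩
        have hnP : ¬ P (GS.connectedComponentMk ⟨z.1, hzS⟩) := by
          rintro ⟨b, hadj, hmk⟩
          apply hD
          have hr : GS.Reachable b ⟨z.1, hzS⟩ := ConnectedComponent.exact hmk
          have hrA : GA.Reachable (ι b) (ι ⟨z.1, hzS⟩) := hr.map ι
          have hadjA : GA.Adj ⟨v, hvA⟩ (ι b) := hadj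
          apply ConnectedComponent.sound
          have : GA.Reachable ⟨v, hvA⟩ z := hadjA.reachable.trans hrA
          exact this.symm
        simp only [g]
        rw [dif_neg hnP]
        congr 1
      · simp only [Finset.mem_sdiff, mem_neighborFinset] at hb
        have hbS : b ∈ sS := (hmemS b).2 hb.2
        refine ⟨GS.connectedComponentMk ⟨b, hbS⟩, ?_⟩
        have hP1 : P (GS.connectedComponentMk ⟨b, hbS⟩) := ⟨⟨b, hbS⟩, hb.1, rfl⟩
        simp only [g]
        rw [dif_pos hP1]
        congr 1
        apply Subtype.ext
        show (hP1.choose.1 : V) = b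
        obtain ⟨hadj', hmk'⟩ := hP1.choose_spec
        by_contra hne
        obtain ⟨Wr⟩ := ConnectedComponent.exact hmk'
        have hWt : v ∉ (Wr.map emb).support := by
          rw [Walk.support_map]
          intro hmem
          obtain ⟨z', hz', hz'v⟩ := List.mem_map.mp hmem
          exact hvS (hz'v ▸ z'.2)
        exact acyclic_two_nbrs hT hadj' hb.1 hne (Wr.map emb) hWt
  have hcard1 : Nat.card GS.ConnectedComponent
      = Nat.card {D : GA.ConnectedComponent // D ≠ Cv} + (T.neighborFinset v \ S).card := by
    rw [Nat.card_eq_of_bijective g hbij, Nat.card_sum, Nat.card_eq_finsetCard]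
  have hcard2 : Nat.card GA.ConnectedComponent
      = Nat.card {D : GA.ConnectedComponent // D ≠ Cv} + 1 := by
    have e := (Equiv.sumCompl (· = Cv)).symm
    rw [Nat.card_congr e, Nat.card_sum]
    haveI : Unique {x : GA.ConnectedComponent // x = Cv} :=
      ⟨⟨⟨Cv, rfl⟩⟩, by rintro ⟨x, rfl⟩; rfl⟩
    rw [Nat.card_unique]
    exact Nat.add_comm _ _
  rw [hcard1, hcard2]
  omega

end Helpers

section Helpers2
variable {V : Type*} {T : SimpleGraph V}

lemma support_getElem_eq_getVert :
    ∀ {a b : V} (p : T.Walk a b) (i : ℕ) (h : i < p.support.length),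
      p.support[i]'h = p.getVert i := by
  intro a b p
  induction p with
  | nil => intro i h; simp [Walk.support_nil] at h; subst h; rfl
  | cons hadj p ih =>
    intro i h
    cases i with
    | zero => rfl
    | succ i =>
      rw [Walk.getVert_cons_succ]
      exact ih i (by simpa [Walk.support_cons] using h)

lemma exists_subwalk :
    ∀ {a b : V} (p : T.Walk a b) (i j : ℕ), i ≤ j → j ≤ p.length →
      ∃ q : T.Walk (p.getVert i) (p.getVert j),
        q.support = (p.support.drop i).take (j - i + 1) := by
  intro a b p
  induction p with
  | nil =>
    intro i j hij hj
    simp only [Walk.length_nil, Nat.le_zero] at hj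
    subst hj
    obtain rfl : i = 0 := Nat.le_zero.mp hij
    exact ⟨Walk.nil, by simp⟩
  | cons hadj p ih =>
    intro i j hij hj
    match i, j with
    | 0, 0 => exact ⟨Walk.nil, by simp⟩
    | 0, j + 1 =>
      obtain ⟨q', hq'⟩ := ih 0 j (Nat.zero_le _) (by simpa using hj)
      refine ⟨Walk.cons hadj (q'.copy (p.getVert_zero) rfl), ?_⟩
      rw [Walk.support_cons]
      refine (congrArg (List.cons _) ((Walk.support_copy _ _ _).trans hq')).trans ?_
      simp [Walk.support_cons, hq']
    | i + 1, j + 1 =>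
      obtain ⟨q', hq'⟩ := ih i j (by omega) (by simpa using hj)
      refine ⟨q', ?_⟩
      simp only [Walk.support_cons, List.drop_succ_cons, hq']
      refine hq'.trans ?_
      congr 1
      omega

lemma getVert_injOn {a b : V} {p : T.Walk a b} (hp : p.IsPath) {i j : ℕ}
    (hi : i ≤ p.length) (hj : j ≤ p.length) (h : p.getVert i = p.getVert j) : i = j := by
  have hi' : i < p.support.length := by rw [Walk.length_support]; omega
  have hj' : j < p.support.length := by rw [Walk.length_support]; omega
  rw [← support_getElem_eq_getVert p i hi', ← support_getElem_eq_getVert p j hj'] at h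
  exact (hp.support_nodup.getElem_inj_iff).mp h

lemma subwalk_isPath {a b : V} {p : T.Walk a b} (hp : p.IsPath) {i j : ℕ}
    {q : T.Walk (p.getVert i) (p.getVert j)}
    (hq : q.support = (p.support.drop i).take (j - i + 1)) : q.IsPath := by
  apply Walk.IsPath.mk'
  rw [hq]
  exact hp.support_nodup.sublist ((List.take_sublist _ _).trans (List.drop_sublist _ _))

lemma subwalk_support_subset {a b : V} {p : T.Walk a b} {i j : ℕ}
    {q : T.Walk (p.getVert i) (p.getVert j)}
    (hq : q.support = (p.support.drop i).take (j - i + 1)) :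
    ∀ x ∈ q.support, x ∈ p.support := by
  intro x hx
  rw [hq] at hx
  exact ((List.take_sublist _ _).trans (List.drop_sublist _ _)).mem hx

/-- Nonconsecutive vertices of a path in an acyclic graph are not adjacent. -/
lemma not_adj_of_nonconsec (hT : T.IsAcyclic) {a b : V} {p : T.Walk a b} (hp : p.IsPath)
    {i j : ℕ} (hij : i + 2 ≤ j) (hj : j ≤ p.length) :
    ¬ T.Adj (p.getVert i) (p.getVert j) := by
  intro hadj
  obtain ⟨q, hq⟩ := exists_subwalk p i j (by omega) hj
  have hqp : q.IsPath := subwalk_isPath hp hq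
  have h2 : (Walk.cons hadj Walk.nil : T.Walk _ _).IsPath := by
    simp [Walk.cons_isPath_iff, hadj.ne]
  have huniq := isAcyclic_iff_path_unique.mp hT ⟨q, hqp⟩ ⟨_, h2⟩
  have hqeq : q = Walk.cons hadj Walk.nil := congrArg Subtype.val huniq
  -- the vertex at position i+1 is in q's support
  have hlen : 1 < ((p.support.drop i).take (j - i + 1)).length := by
    rw [List.length_take, List.length_drop, Walk.length_support]
    omega
  have hmem : p.getVert (i + 1) ∈ q.support := by
    rw [hq]
    have : ((p.support.drop i).take (j - i + 1))[1]'hlen = p.getVert (i+1) := by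
      rw [List.getElem_take, List.getElem_drop, support_getElem_eq_getVert]
    rw [← this]
    exact List.getElem_mem _
  rw [hqeq] at hmem
  simp only [Walk.support_cons, Walk.support_nil, List.mem_cons, List.mem_singleton,
    List.not_mem_nil, or_false] at hmem
  rcases hmem with h | h
  · have := getVert_injOn hp (by omega) (by omega) h; omega
  · have := getVert_injOn hp (by omega) hj h; omega

/-- any path between two vertices of `p` stays on `p` (acyclic graph). -/
lemma path_between_on_path (hT : T.IsAcyclic) {a b : V} {p : T.Walk a b} (hp : p.IsPath)
    {i j : ℕ} (hi : i ≤ p.length) (hj : j ≤ p.length)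
    (W : T.Walk (p.getVert i) (p.getVert j)) (hW : W.IsPath) :
    ∀ x ∈ W.support, x ∈ p.support := by
  rcases le_total i j with h | h
  · obtain ⟨q, hq⟩ := exists_subwalk p i j h hj
    have huniq := isAcyclic_iff_path_unique.mp hT ⟨W, hW⟩ ⟨q, subwalk_isPath hp hq⟩
    have : W = q := congrArg Subtype.val huniq
    rw [this]
    exact subwalk_support_subset hq
  · obtain ⟨q, hq⟩ := exists_subwalk p j i h hi
    have huniq := isAcyclic_iff_path_unique.mp hT ⟨W.reverse, hW.reverse⟩ ⟨q, subwalk_isPath hp hq⟩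
    have hWq : W.reverse = q := congrArg Subtype.val huniq
    intro x hx
    have : x ∈ W.reverse.support := by rwa [Walk.support_reverse, List.mem_reverse]
    rw [hWq] at this
    exact subwalk_support_subset hq x this

section Caterpillar
variable [Fintype V] [DecidableRel T.Adj]

/-- the start of a longest path has degree 1. -/
lemma degree_start_eq_one (hT : T.IsAcyclic) {a b : V} {p : T.Walk a b} (hp : p.IsPath)
    (hlen : 1 ≤ p.length)
    (hlongest : ∀ (x y : V) (q : T.Walk x y), q.IsPath → q.support.length ≤ p.support.length) :
    T.degree a = 1 := by
  have hadj1 : T.Adj a (p.getVert 1) := by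
    have := p.adj_getVert_succ (by omega : 0 < p.length)
    rwa [Walk.getVert_zero] at this
  have : T.neighborFinset a = {p.getVert 1} := by
    ext x
    simp only [mem_neighborFinset, Finset.mem_singleton]
    constructor
    · intro hx
      by_cases hxs : x ∈ p.support
      · obtain ⟨m, hm, hmle⟩ := Walk.mem_support_iff_exists_getVert.mp hxs
        subst hm
        rcases Nat.lt_or_ge m 2 with h2 | h2
        · interval_cases m
          · exact absurd hx (by rw [p.getVert_zero]; exact T.loopless.irrefl a)
          · rfl
        · exact absurd (show T.Adj (p.getVert 0) (p.getVert m) by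
              rw [p.getVert_zero]; exact hx)
            (not_adj_of_nonconsec hT hp (by omega) hmle)
      · exfalso
        have hq : (Walk.cons hx.symm p).IsPath := by
          rw [Walk.cons_isPath_iff]
          exact ⟨hp, hxs⟩
        have := hlongest _ _ _ hq
        rw [Walk.support_cons] at this
        simp at this
    · intro hx; subst hx; exact hadj1
  rw [degree, this, Finset.card_singleton]

/-- an off-path vertex of a caterpillar has no two distinct neighbors. -/
lemma off_path_no_two_nbrs (hT : T.IsAcyclic) {a b : V} {p : T.Walk a b} (hp : p.IsPath)
    (hcover : ∀ x : V, x ∈ p.support ∨ ∃ y ∈ p.support, T.Adj x y)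
    {x y z : V} (hx : x ∉ p.support) (hxy : T.Adj x y) (hxz : T.Adj x z) (hyz : y ≠ z) :
    False := by
  classical
  -- t : path vertex adjacent to x
  obtain ht | ⟨t, htmem, hxt⟩ := hcover x
  · exact hx ht
  -- pick a neighbor z' of x with z' ≠ t
  obtain ⟨z', hxz', hz't⟩ : ∃ z', T.Adj x z' ∧ z' ≠ t := by
    by_cases hyt : y = t
    · exact ⟨z, hxz, fun h => hyz (hyt.trans h.symm)⟩
    · exact ⟨y, hxy, hyt⟩
  obtain ⟨it, hti, hitle⟩ := Walk.mem_support_iff_exists_getVert.mp htmem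
  by_cases hz's : z' ∈ p.support
  · -- path t — x — z' between two path vertices
    obtain ⟨iz, hzi, hizle⟩ := Walk.mem_support_iff_exists_getVert.mp hz's
    have hW : (Walk.cons hxt.symm (Walk.cons hxz' Walk.nil) : T.Walk t z').IsPath := by
      rw [Walk.cons_isPath_iff, Walk.cons_isPath_iff]
      refine ⟨⟨Walk.IsPath.nil, by simp [hxz'.ne]⟩, ?_⟩
      simp only [Walk.support_cons, Walk.support_nil, List.mem_cons, List.not_mem_nil]
      push_neg
      exact ⟨fun h => hx (h ▸ htmem), fun h => hz't h.symm, trivial⟩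
    have := path_between_on_path hT hp hitle hizle
      ((Walk.cons hxt.symm (Walk.cons hxz' Walk.nil)).copy hti.symm hzi.symm)
      (by rwa [Walk.isPath_copy])
    apply hx
    apply this
    simp [Walk.support_copy, Walk.support_cons]
  · -- z' is also off-path; it has a path-neighbor t'
    obtain hz'mem | ⟨t', ht'mem, hz't'⟩ := hcover z'
    · exact hz's hz'mem
    by_cases htt' : t' = t
    · -- two distinct paths x → z' : the edge, and x — t — z'
      subst htt'
      have h1 : (Walk.cons hxz' Walk.nil : T.Walk x z').IsPath := by
        simp [Walk.cons_isPath_iff, hxz'.ne]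
      have h2 : (Walk.cons hxt (Walk.cons (hz't'.symm) Walk.nil) : T.Walk x z').IsPath := by
        rw [Walk.cons_isPath_iff, Walk.cons_isPath_iff]
        refine ⟨⟨Walk.IsPath.nil, by
          simp only [Walk.support_nil, List.mem_singleton]
          exact fun h => hz's (h ▸ ht'mem)⟩, ?_⟩
        simp only [Walk.support_cons, Walk.support_nil, List.mem_cons, List.not_mem_nil]
        push_neg
        exact ⟨fun h => hx (h ▸ ht'mem), hxz'.ne, trivial⟩
      have huniq := isAcyclic_iff_path_unique.mp hT ⟨_, h1⟩ ⟨_, h2⟩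
      have : (Walk.cons hxz' Walk.nil : T.Walk x z')
          = Walk.cons hxt (Walk.cons (hz't'.symm) Walk.nil) := congrArg Subtype.val huniq
      have := congrArg Walk.length this
      simp [Walk.length_cons] at this
    · -- path t — x — z' — t' between two path vertices
      obtain ⟨iz, hzi, hizle⟩ := Walk.mem_support_iff_exists_getVert.mp ht'mem
      have hW : (Walk.cons hxt.symm (Walk.cons hxz' (Walk.cons hz't' Walk.nil))
          : T.Walk t t').IsPath := by
        rw [Walk.cons_isPath_iff, Walk.cons_isPath_iff, Walk.cons_isPath_iff]
        refine ⟨⟨⟨Walk.IsPath.nil, by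
          simp only [Walk.support_nil, List.mem_singleton]
          exact fun h => hz's (h.symm ▸ ht'mem)⟩, ?_⟩, ?_⟩
        · simp only [Walk.support_cons, Walk.support_nil, List.mem_cons, List.not_mem_nil]
          push_neg
          exact ⟨hxz'.ne, fun h => hx (h ▸ ht'mem), trivial⟩
        · simp only [Walk.support_cons, Walk.support_nil, List.mem_cons, List.not_mem_nil]
          push_neg
          exact ⟨fun h => hx (h ▸ htmem), fun h => hz't h.symm,
            fun h => htt' (h.symm ▸ rfl), trivial⟩
      have := path_between_on_path hT hp hitle hizle
        ((Walk.cons hxt.symm (Walk.cons hxz' (Walk.cons hz't' Walk.nil))).copy hti.symm hzi.symm)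
        (by rwa [Walk.isPath_copy])
      apply hx
      apply this
      simp [Walk.support_copy, Walk.support_cons]

end Caterpillar
end Helpers2

/-- Characterization of when `c(S \ {v}) < c(S)` for all `v ∈ S` (equivalently,
when `P_S(T)` is a minimal prime of the binomial edge ideal), for a nonempty
set `S` of vertices of a caterpillar tree `T` with central path
`p : v_1, …, v_ℓ` (`ℓ ≥ 3`), the central path being a longest (induced) path.
Here `c A` is the number of connected components of the induced subgraph on
the complement of `A`. -/
theorem caterpillar_minimal_prime_characterization {V : Type*} [Fintype V] [DecidableEq V]
    (T : SimpleGraph V) [DecidableRel T.Adj] (hT : T.IsTree)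
    (u w : V) (p : T.Walk u w) (hp : p.IsPath)
    (hcover : ∀ x : V, x ∈ p.support ∨ ∃ y ∈ p.support, T.Adj x y)
    {ℓ : ℕ} (hplen : p.support.length = ℓ) (hℓ : 3 ≤ ℓ)
    (hlongest : ∀ (a b : V) (q : T.Walk a b), q.IsPath → q.support.length ≤ ℓ)
    (S : Finset V) (hS : S.Nonempty)
    (c : Finset V → ℕ)
    (hc : ∀ A : Finset V,
      c A = Nat.card ((T.induce ((↑A : Set V)ᶜ)).ConnectedComponent)) :
    (∀ v ∈ S, c (S.erase v) < c S) ↔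
      ∀ v ∈ S, ∃ k : ℕ, 0 < k ∧ k + 1 < p.support.length ∧
        p.support.getD k u = v ∧
        (T.degree v = 2 →
          p.support.getD (k - 1) u ∉ S ∧ p.support.getD (k + 1) u ∉ S) ∧
        (T.degree v = 3 →
          p.support.getD (k - 1) u ∉ S ∨ p.support.getD (k + 1) u ∉ S) := by
  classical
  subst hplen
  have hacyc : T.IsAcyclic := hT.IsAcyclic
  have hlen2 : 2 ≤ p.length := by have := p.length_support; omega
  have hgetD : ∀ k, k < p.support.length → p.support.getD k u = p.getVert k := by
    intro k h
    rw [List.getD_eq_getElem _ _ h, support_getElem_eq_getVert]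
  have hdeg_u : T.degree u = 1 :=
    degree_start_eq_one hacyc hp (by omega) (fun x y q hq => hlongest x y q hq)
  have hdeg_w : T.degree w = 1 := by
    refine degree_start_eq_one hacyc hp.reverse (by rw [Walk.length_reverse]; omega) ?_
    intro x y q hq
    rw [Walk.support_reverse, List.length_reverse]
    exact hlongest x y q hq
  have key : ∀ v ∈ S, (c (S.erase v) < c S ↔ 2 ≤ (T.neighborFinset v \ S).card) := by
    intro v hv
    have hcs := count_step hacyc S hv
    rw [hc, hc]
    omega
  have hsupplen : p.support.length = p.length + 1 := p.length_support
  constructor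
  · -- forward direction
    intro hL v hv
    have hcond : ∀ x ∈ S, 2 ≤ (T.neighborFinset x \ S).card :=
      fun x hx => (key x hx).mp (hL x hx)
    have h2 := hcond v hv
    obtain ⟨x, hxmem, y, hymem, hxy⟩ := Finset.one_lt_card.mp (show 1 < (T.neighborFinset v \ S).card by omega)
    rw [Finset.mem_sdiff, mem_neighborFinset] at hxmem hymem
    have hdegv : 2 ≤ T.degree v := by
      have hsub : ({x, y} : Finset V) ⊆ T.neighborFinset v := by
        intro z hz
        rw [Finset.mem_insert, Finset.mem_singleton] at hz
        rcases hz with rfl | rfl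
        · exact (mem_neighborFinset _ _ _).mpr hxmem.1
        · exact (mem_neighborFinset _ _ _).mpr hymem.1
      calc 2 = ({x, y} : Finset V).card := (Finset.card_pair hxy).symm
        _ ≤ _ := Finset.card_le_card hsub
    have hvsup : v ∈ p.support := by
      by_contra hvs
      exact off_path_no_two_nbrs hacyc hp hcover hvs hxmem.1 hymem.1 hxy
    obtain ⟨k, hk, hkle⟩ := Walk.mem_support_iff_exists_getVert.mp hvsup
    have hk0 : k ≠ 0 := by
      rintro rfl
      rw [p.getVert_zero] at hk
      rw [← hk, hdeg_u] at hdegv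
      omega
    have hkn : k ≠ p.length := by
      rintro rfl
      rw [p.getVert_length] at hk
      rw [← hk, hdeg_w] at hdegv
      omega
    have hadja : T.Adj v (p.getVert (k - 1)) := by
      have := p.adj_getVert_succ (i := k - 1) (by omega)
      rw [show k - 1 + 1 = k by omega, hk] at this
      exact this.symm
    have hadjb : T.Adj v (p.getVert (k + 1)) := by
      have := p.adj_getVert_succ (i := k) (by omega)
      rw [hk] at this
      exact this
    have hab : p.getVert (k - 1) ≠ p.getVert (k + 1) := by
      intro h
      have := getVert_injOn hp (by omega) (by omega) h
      omega
    have hsubN : ({p.getVert (k - 1), p.getVert (k + 1)} : Finset V) ⊆ T.neighborFinset v := by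
      intro z hz
      rw [Finset.mem_insert, Finset.mem_singleton] at hz
      rcases hz with rfl | rfl
      · exact (mem_neighborFinset _ _ _).mpr hadja
      · exact (mem_neighborFinset _ _ _).mpr hadjb
    refine ⟨k, by omega, by omega, by rw [hgetD k (by omega)]; exact hk, ?_, ?_⟩
    · intro hdeg2
      have hNeq : T.neighborFinset v = {p.getVert (k - 1), p.getVert (k + 1)} :=
        (Finset.eq_of_subset_of_card_le hsubN
          (by rw [Finset.card_pair hab, ← hdeg2]; rfl)).symm
      have hdiff : T.neighborFinset v \ S = T.neighborFinset v := by
        apply Finset.eq_of_subset_of_card_le (Finset.sdiff_subset)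
        rw [← T.card_neighborFinset_eq_degree, hdeg2] at *
        omega
      have ha' : p.getVert (k - 1) ∈ T.neighborFinset v \ S := by
        rw [hdiff, hNeq]; exact Finset.mem_insert_self _ _
      have hb' : p.getVert (k + 1) ∈ T.neighborFinset v \ S := by
        rw [hdiff, hNeq]; exact Finset.mem_insert_of_mem (Finset.mem_singleton_self _)
      rw [Finset.mem_sdiff] at ha' hb'
      rw [hgetD (k - 1) (by omega), hgetD (k + 1) (by omega)]
      exact ⟨ha'.2, hb'.2⟩
    · intro hdeg3
      rw [hgetD (k - 1) (by omega), hgetD (k + 1) (by omega)]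
      by_contra hcon
      push_neg at hcon
      have hss : T.neighborFinset v \ S
          ⊆ T.neighborFinset v \ {p.getVert (k - 1), p.getVert (k + 1)} := by
        intro z hz
        rw [Finset.mem_sdiff] at hz ⊢
        refine ⟨hz.1, ?_⟩
        rw [Finset.mem_insert, Finset.mem_singleton]
        push_neg
        constructor
        · rintro rfl; exact hz.2 hcon.1
        · rintro rfl; exact hz.2 hcon.2
      have := Finset.card_le_card hss
      rw [Finset.card_sdiff_of_subset hsubN, Finset.card_pair hab,
        T.card_neighborFinset_eq_degree, hdeg3] at this
      omega
  · -- backward direction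
    intro hR v hv
    apply (key v hv).mpr
    obtain ⟨k, hk0, hk1, hkv, hd2, hd3⟩ := hR v hv
    rw [hgetD k (by omega)] at hkv
    have hkle : k + 1 ≤ p.length := by omega
    have hadja : T.Adj v (p.getVert (k - 1)) := by
      have := p.adj_getVert_succ (i := k - 1) (by omega)
      rw [show k - 1 + 1 = k by omega, hkv] at this
      exact this.symm
    have hadjb : T.Adj v (p.getVert (k + 1)) := by
      have := p.adj_getVert_succ (i := k) (by omega)
      rw [hkv] at this
      exact this
    have hab : p.getVert (k - 1) ≠ p.getVert (k + 1) := by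
      intro h
      have := getVert_injOn hp (by omega) (by omega) h
      omega
    have hsubN : ({p.getVert (k - 1), p.getVert (k + 1)} : Finset V) ⊆ T.neighborFinset v := by
      intro z hz
      rw [Finset.mem_insert, Finset.mem_singleton] at hz
      rcases hz with rfl | rfl
      · exact (mem_neighborFinset _ _ _).mpr hadja
      · exact (mem_neighborFinset _ _ _).mpr hadjb
    have hSsup : ∀ x ∈ S, ∃ m, m ≤ p.length ∧ p.getVert m = x := by
      intro x hx
      obtain ⟨m, hm0, hm1, hmx, _, _⟩ := hR x hx
      rw [hgetD m (by omega)] at hmx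
      exact ⟨m, by omega, hmx⟩
    have hnotS : ∀ x ∈ T.neighborFinset v,
        x ≠ p.getVert (k - 1) → x ≠ p.getVert (k + 1) → x ∉ S := by
      intro x hxN hxa hxb hxS
      obtain ⟨m, hmle, hmx⟩ := hSsup x hxS
      subst hmx
      rw [mem_neighborFinset] at hxN
      have hmk : m ≠ k := by
        rintro rfl
        rw [hkv] at hxN
        exact T.loopless.irrefl _ hxN
      have hma : m ≠ k - 1 := fun h => hxa (by rw [h])
      have hmb : m ≠ k + 1 := fun h => hxb (by rw [h])
      rcases Nat.lt_or_ge m k with h | h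
      · exact not_adj_of_nonconsec hacyc hp (i := m) (j := k) (by omega) (by omega)
          (by rw [hkv]; exact hxN.symm)
      · exact not_adj_of_nonconsec hacyc hp (i := k) (j := m) (by omega) (by omega)
          (by rw [hkv]; exact hxN)
    have hdegv : 2 ≤ T.degree v := by
      calc 2 = ({p.getVert (k - 1), p.getVert (k + 1)} : Finset V).card :=
            (Finset.card_pair hab).symm
        _ ≤ _ := Finset.card_le_card hsubN
    apply Finset.one_lt_card.mpr
    rcases Nat.lt_or_ge (T.degree v) 4 with hd | hd
    · have : T.degree v = 2 ∨ T.degree v = 3 := by omega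
      rcases this with hdeg | hdeg
      · -- degree two
        obtain ⟨ha, hb⟩ := hd2 hdeg
        rw [hgetD (k - 1) (by omega)] at ha
        rw [hgetD (k + 1) (by omega)] at hb
        exact ⟨p.getVert (k - 1), Finset.mem_sdiff.mpr ⟨hsubN (Finset.mem_insert_self _ _), ha⟩,
          p.getVert (k + 1),
          Finset.mem_sdiff.mpr ⟨hsubN (Finset.mem_insert_of_mem (Finset.mem_singleton_self _)), hb⟩,
          hab⟩
      · -- degree three
        have hcard : (T.neighborFinset v \ {p.getVert (k - 1), p.getVert (k + 1)}).card = 1 := by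
          rw [Finset.card_sdiff_of_subset hsubN, Finset.card_pair hab,
            T.card_neighborFinset_eq_degree, hdeg]
        obtain ⟨x, hx⟩ := Finset.card_pos.mp (show 0 < (T.neighborFinset v \ {p.getVert (k - 1), p.getVert (k + 1)}).card by omega)
        rw [Finset.mem_sdiff, Finset.mem_insert, Finset.mem_singleton] at hx
        push_neg at hx
        have hxS : x ∉ S := hnotS x hx.1 hx.2.1 hx.2.2
        have hone := hd3 hdeg
        rw [hgetD (k - 1) (by omega), hgetD (k + 1) (by omega)] at hone
        rcases hone with ha | hb
        · exact ⟨x, Finset.mem_sdiff.mpr ⟨hx.1, hxS⟩, p.getVert (k - 1),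
            Finset.mem_sdiff.mpr ⟨hsubN (Finset.mem_insert_self _ _), ha⟩, hx.2.1⟩
        · exact ⟨x, Finset.mem_sdiff.mpr ⟨hx.1, hxS⟩, p.getVert (k + 1),
            Finset.mem_sdiff.mpr
              ⟨hsubN (Finset.mem_insert_of_mem (Finset.mem_singleton_self _)), hb⟩, hx.2.2⟩
    · -- degree at least four
      have hcard : 2 ≤ (T.neighborFinset v \ {p.getVert (k - 1), p.getVert (k + 1)}).card := by
        rw [Finset.card_sdiff_of_subset hsubN, Finset.card_pair hab, T.card_neighborFinset_eq_degree]
        omega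
      obtain ⟨x, hx, y, hy, hxy⟩ := Finset.one_lt_card.mp (show 1 < (T.neighborFinset v \ {p.getVert (k - 1), p.getVert (k + 1)}).card by omega)
      rw [Finset.mem_sdiff, Finset.mem_insert, Finset.mem_singleton] at hx hy
      push_neg at hx hy
      exact ⟨x, Finset.mem_sdiff.mpr ⟨hx.1, hnotS x hx.1 hx.2.1 hx.2.2⟩,
        y, Finset.mem_sdiff.mpr ⟨hy.1, hnotS y hy.1 hy.2.1 hy.2.2⟩, hxy⟩
end

section
/- Let T be a tree on the vertex set {1,…,n}, not a path, and suppose there exists a labeling such that T is 3-closed. Then there exists a bipartite graph H on {x_1,…,x_n} ⊔ {y_1,…,y_n} with exactly n−1 edges such that: (1) {x_i, y_j} ∈ E(H) implies i < j; (2) for every i ∈ {1,…,n−1}, either {x_i, y_{i+1}} ∈ E(H), or there exists j > i+1 with {x_i, y_j}, {x_{i+1}, y_j} ∈ E(H), or there exists j < i with {x_j, y_i}, {x_j, y_{i+1}} ∈ E(H); and T is isomorphic to the graph H_* on {1,…,n} with edge set {{i,j} : {x_i,y_j} ∈ E(H)}. Conversely, if such an H exists with H_* a tree that is not a path, then H_*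 admits a labeling in which every admissible path has at most 3 vertices. -/
/-- The graph `H_*` on `{1,…,n}` associated to a bipartite graph `H` on
`{x_1,…,x_n} ⊔ {y_1,…,y_n}`, where `H` is encoded as the set `E` of pairs
`(i, j)` with `{x_i, y_j} ∈ E(H)`: its edges are the `{i, j}`. -/
def HstarGraph {n : ℕ} (E : Finset (Fin n × Fin n)) : SimpleGraph (Fin n) :=
  SimpleGraph.fromEdgeSet ↑(E.image fun p => s(p.1, p.2))

/-- The conditions of Theorem 3.6: (1) `{x_i, y_j} ∈ E(H)` implies `i < j`;
(2) for each `i < n`, `{x_i, y_{i+1}} ∈ E(H)`, or `{x_i, y_j}, {x_{i+1}, y_j}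
∈ E(H)` for some `j > i+1`, or `{x_j, y_i}, {x_j, y_{i+1}} ∈ E(H)` for some
`j < i`; (3) `H` has exactly `n − 1` edges. -/
def BipartiteConds {n : ℕ} (E : Finset (Fin n × Fin n)) : Prop :=
  (∀ p ∈ E, p.1 < p.2) ∧
  (∀ i j : Fin n, (j : ℕ) = (i : ℕ) + 1 →
    ((i, j) ∈ E ∨
     (∃ k : Fin n, (j : ℕ) < (k : ℕ) ∧ (i, k) ∈ E ∧ (j, k) ∈ E) ∨
     (∃ k : Fin n, (k : ℕ) < (i : ℕ) ∧ (k, i) ∈ E ∧ (k, j) ∈ E))) ∧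
  E.card = n - 1

lemma reachable_of_chain {V : Type*} {G : SimpleGraph V} :
    ∀ (l : List V) (x y : V), l.Chain' G.Adj → l.head? = some x →
      l.getLast? = some y → G.Reachable x y
  | [], x, y, _, hx, _ => by simp at hx
  | [a], x, y, _, hx, hy => by
      simp at hx hy; subst hx; subst hy; rfl
  | a :: b :: rest, x, y, hch, hx, hy => by
      rw [show @List.Chain' = @List.IsChain from rfl, List.isChain_cons_cons] at hch
      simp only [List.head?_cons, Option.some.injEq] at hx
      subst hx
      rw [List.getLast?_cons_cons] at hy
      exact (hch.1.reachable).trans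
        (reachable_of_chain (b :: rest) b y hch.2 rfl hy)

lemma chain'_transfer {V : Type*} {G H : SimpleGraph V} :
    ∀ (l : List V), l.Chain' G.Adj →
      (∀ x ∈ l, ∀ y ∈ l, G.Adj x y → H.Adj x y) → l.Chain' H.Adj
  | [], _, _ => List.isChain_nil
  | [_], _, _ => List.isChain_singleton _
  | a :: b :: rest, hch, hmem => by
      rw [show @List.Chain' = @List.IsChain from rfl, List.isChain_cons_cons] at hch ⊢
      refine ⟨hmem a (by simp) b (by simp) hch.1, ?_⟩
      exact chain'_transfer (b :: rest) hch.2
        (fun x hx y hy => hmem x (by simp [hx]) y (by simp [hy]))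


lemma exists_min_path {V : Type*} (G : SimpleGraph V) (i j : V) (h : G.Reachable i j) :
    ∃ l : List V, IsPathList G l ∧ l.head? = some i ∧ l.getLast? = some j ∧
      ∀ l' : List V, IsPathList G l' → l'.head? = some i → l'.getLast? = some j →
        l.length ≤ l'.length := by
  classical
  have hne : ∃ m, m ∈ {m | ∃ l : List V, IsPathList G l ∧ l.head? = some i ∧
      l.getLast? = some j ∧ l.length = m} := by
    obtain ⟨w⟩ := h
    refine ⟨w.toPath.1.support.length, w.toPath.1.support, ⟨?_, ?_⟩, ?_, ?_, rfl⟩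
    · exact SimpleGraph.Walk.isChain_adj_support _
    · exact w.toPath.2.support_nodup
    · rw [SimpleGraph.Walk.support_eq_cons]; rfl
    · rw [List.getLast?_eq_getLast (SimpleGraph.Walk.support_ne_nil _),
        SimpleGraph.Walk.getLast_support]
  obtain ⟨l, hl1, hl2, hl3, hl4⟩ := Nat.find_spec hne
  refine ⟨l, hl1, hl2, hl3, fun l' h1 h2 h3 => ?_⟩
  rw [hl4]
  exact Nat.find_min' hne ⟨l', h1, h2, h3, rfl⟩


lemma dist_le_two {n : ℕ} (G : SimpleGraph (Fin n)) (hc : G.Connected)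
    (he : ∀ l : List (Fin n), IsAdmissible G l → l.length ≤ 3)
    (i j : Fin n) (hij : (j : ℕ) = (i : ℕ) + 1) :
    G.Adj i j ∨
      (∃ k : Fin n, (j : ℕ) < (k : ℕ) ∧ G.Adj i k ∧ G.Adj j k) ∨
      (∃ k : Fin n, (k : ℕ) < (i : ℕ) ∧ G.Adj k i ∧ G.Adj k j) := by
  have hlt : i < j := by rw [Fin.lt_def]; omega
  have hne0 : i ≠ j := Fin.ne_of_lt hlt
  obtain ⟨l, hl1, hl2, hl3, hl4⟩ := exists_min_path G i j (hc.preconnected i j)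
  -- destructure l = i :: tl with tl ≠ []
  obtain ⟨tl, rfl⟩ : ∃ tl, l = i :: tl := by
    cases l with
    | nil => simp at hl2
    | cons a tl => exact ⟨tl, by rw [show a = i by simpa using hl2]⟩
  have htl : tl ≠ [] := by
    rintro rfl
    simp at hl3
    exact hne0 hl3
  have htlLast : tl.getLast? = some j := by
    cases tl with
    | nil => exact absurd rfl htl
    | cons b tl2 => rw [← List.getLast?_cons_cons (a := i)]; exact hl3
  -- interior vertices differ from i and j
  have hint : ∀ v ∈ (i :: tl).tail.dropLast, v < i ∨ j < v := by
    intro v hv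
    have hv1 : v ∈ tl := (List.dropLast_sublist tl).subset hv
    have hvi : v ≠ i := by
      rintro rfl
      exact (List.nodup_cons.mp hl1.2).1 hv1
    have hvj : v ≠ j := by
      rintro rfl
      have hgl : tl.getLast htl = v := by
        have := htlLast
        rw [List.getLast?_eq_getLast htl] at this
        exact Option.some.inj this
      have hnd : tl.Nodup := (List.nodup_cons.mp hl1.2).2
      rw [← List.dropLast_append_getLast htl] at hnd
      have hv2 : v ∈ tl.dropLast := hv
      exact (List.nodup_append'.mp hnd).2.2 hv2 (by simp [hgl])
    rw [Fin.lt_def, Fin.lt_def]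
    have h1 : (v : ℕ) ≠ (i : ℕ) := fun h => hvi (Fin.ext h)
    have h2 : (v : ℕ) ≠ (j : ℕ) := fun h => hvj (Fin.ext h)
    omega
  have hlen2 : 2 ≤ (i :: tl).length := by
    cases tl with
    | nil => exact absurd rfl htl
    | cons b tl2 => simp only [List.length_cons]; omega
  have hadm : IsAdmissible G (i :: tl) := by
    refine ⟨i, j, hlt, hl2, hl3, hl1, hint, ?_⟩
    intro l' hsub hne hPL
    have hlt' : l'.length < (i :: tl).tail.dropLast.length := by
      rcases Nat.lt_or_ge l'.length ((i :: tl).tail.dropLast.length) with h | h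
      · exact h
      · exact absurd (hsub.eq_of_length (le_antisymm hsub.length_le h)) hne
    have hcand := hl4 (i :: (l' ++ [j])) hPL (by rfl)
      (by rw [show i :: (l' ++ [j]) = (i :: l') ++ [j] by simp, List.getLast?_concat])
    have hA : l'.length < tl.length - 1 := by simpa using hlt'
    have hB : tl.length + 1 ≤ l'.length + 1 + 1 := by simpa using hcand
    omega
  have hlen3 := he _ hadm
  -- now case on the shape of tl
  cases tl with
  | nil => exact absurd rfl htl
  | cons b tl2 =>
    cases tl2 with
    | nil =>
      -- l = [i, b], b = j
      have hb : b = j := by simpa using hl3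
      exact Or.inl (hb ▸ (show G.Adj i b by
        have := hl1.1; rw [show @List.Chain' = @List.IsChain from rfl, List.isChain_cons_cons] at this; exact this.1))
    | cons c tl3 =>
      cases tl3 with
      | nil =>
        -- l = [i, b, c], c = j
        have hc : c = j := by simpa using hl3
        have hadj1 : G.Adj i b := by
          have := hl1.1; rw [show @List.Chain' = @List.IsChain from rfl, List.isChain_cons_cons] at this; exact this.1
        have hadj2 : G.Adj b j := by
          have h2 : G.Adj b c := by
            have := hl1.1; rw [show @List.Chain' = @List.IsChain from rfl, List.isChain_cons_cons] at this
            rw [List.isChain_cons_cons] at this; exact this.2.1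
          exact hc ▸ h2
        have hb := hint b (by simp)
        rcases hb with hb | hb
        · exact Or.inr (Or.inr ⟨b, by rw [Fin.lt_def] at hb; omega,
            hadj1.symm, hadj2⟩)
        · exact Or.inr (Or.inl ⟨b, by rw [Fin.lt_def] at hb; omega,
            hadj1, hadj2.symm⟩)
      | cons d tl4 => exfalso; simp only [List.length_cons] at hlen3; omega

theorem dir1 {n : ℕ} :
    (∀ T : SimpleGraph (Fin n), T.IsTree →
      (¬ ∀ v : Fin n, (T.neighborSet v).ncard ≤ 2) →
      ((∃ e : Fin n ≃ Fin n, ∀ l : List (Fin n),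
          IsAdmissible (T.map e.toEmbedding) l → l.length ≤ 3) ∧
       (∀ e : Fin n ≃ Fin n, ∃ l : List (Fin n),
          IsAdmissible (T.map e.toEmbedding) l ∧ l.length = 3)) →
      ∃ E : Finset (Fin n × Fin n), BipartiteConds E ∧ Nonempty (T ≃g HstarGraph E)) := by
  intro T hT _ h3c
  obtain ⟨⟨e, he⟩, -⟩ := h3c
  classical
  have hadj : ∀ a b : Fin n, (T.map e.toEmbedding).Adj a b ↔ T.Adj (e.symm a) (e.symm b) := by
    intro a b
    rw [SimpleGraph.map_adj]
    constructor
    · rintro ⟨u, v, h, rfl, rfl⟩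
      simpa using h
    · intro h
      exact ⟨e.symm a, e.symm b, h, by simp, by simp⟩
  set E : Finset (Fin n × Fin n) :=
    Finset.univ.filter (fun p : Fin n × Fin n => p.1 < p.2 ∧ (T.map e.toEmbedding).Adj p.1 p.2)
    with hE
  have hmemE : ∀ p : Fin n × Fin n,
      p ∈ E ↔ p.1 < p.2 ∧ (T.map e.toEmbedding).Adj p.1 p.2 := by
    intro p; simp [hE]
  have hc : (T.map e.toEmbedding).Connected :=
    SimpleGraph.Connected.map ⟨e, fun {a b} h => (hadj (e a) (e b)).mpr (by simpa using h)⟩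
      e.surjective hT.isConnected
  have hcond2 : ∀ i j : Fin n, (j : ℕ) = (i : ℕ) + 1 →
      ((i, j) ∈ E ∨
       (∃ k : Fin n, (j : ℕ) < (k : ℕ) ∧ (i, k) ∈ E ∧ (j, k) ∈ E) ∨
       (∃ k : Fin n, (k : ℕ) < (i : ℕ) ∧ (k, i) ∈ E ∧ (k, j) ∈ E)) := by
    intro i j hij
    rcases dist_le_two _ hc he i j hij with hA | ⟨k, hk, h1, h2⟩ | ⟨k, hk, h1, h2⟩
    · exact Or.inl ((hmemE _).mpr ⟨by simp only [Fin.lt_def]; omega, hA⟩)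
    · exact Or.inr (Or.inl ⟨k, hk, (hmemE _).mpr ⟨by simp only [Fin.lt_def]; omega, h1⟩,
        (hmemE _).mpr ⟨by simp only [Fin.lt_def]; omega, h2⟩⟩)
    · exact Or.inr (Or.inr ⟨k, hk, (hmemE _).mpr ⟨by simp only [Fin.lt_def]; omega, h1⟩,
        (hmemE _).mpr ⟨by simp only [Fin.lt_def]; omega, h2⟩⟩)
  have hcard : E.card = n - 1 := by
    have hb : E.card = T.edgeFinset.card := by
      apply Finset.card_bij (fun p _ => s(e.symm p.1, e.symm p.2))
      · intro p hp
        rw [SimpleGraph.mem_edgeFinset, SimpleGraph.mem_edgeSet]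
        exact (hadj p.1 p.2).mp ((hmemE p).mp hp).2
      · intro p hp q hq hpq
        rw [Sym2.eq_iff] at hpq
        rcases hpq with ⟨h1, h2⟩ | ⟨h1, h2⟩
        · exact Prod.ext (e.symm.injective h1) (e.symm.injective h2)
        · exfalso
          have hp' := ((hmemE p).mp hp).1
          have hq' := ((hmemE q).mp hq).1
          have e1 : p.1 = q.2 := e.symm.injective h1
          have e2 : p.2 = q.1 := e.symm.injective h2
          rw [e1, e2] at hp'
          exact absurd hq' (not_lt.mpr hp'.le)
      · intro s hs
        rw [SimpleGraph.mem_edgeFinset] at hs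
        induction s with
        | _ u v =>
          have huv : T.Adj u v := hs
          rcases lt_trichotomy (e u) (e v) with h1 | h1 | h1
          · refine ⟨(e u, e v), (hmemE _).mpr ⟨h1, ?_⟩, by simp⟩
            exact (hadj _ _).mpr (by simpa using huv)
          · exact absurd (e.injective h1) huv.ne
          · refine ⟨(e v, e u), (hmemE _).mpr ⟨h1, ?_⟩, ?_⟩
            · exact (hadj _ _).mpr (by simpa using huv.symm)
            · simp [Sym2.eq_swap]
    have := hT.card_edgeFinset
    rw [Fintype.card_fin] at this
    have hn : 1 ≤ n := by omega
    omega
  have hEq : HstarGraph E = T.map e.toEmbedding := by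
    ext u v
    rw [HstarGraph, SimpleGraph.fromEdgeSet_adj]
    constructor
    · rintro ⟨hmem, hne⟩
      simp only [Finset.coe_image, Set.mem_image, Finset.mem_coe] at hmem
      obtain ⟨p, hp, hps⟩ := hmem
      have hAdj := ((hmemE p).mp hp).2
      rw [Sym2.eq_iff] at hps
      rcases hps with ⟨rfl, rfl⟩ | ⟨rfl, rfl⟩
      · exact hAdj
      · exact hAdj.symm
    · intro h
      refine ⟨?_, h.ne⟩
      simp only [Finset.coe_image, Set.mem_image, Finset.mem_coe]
      rcases lt_trichotomy u v with h1 | h1 | h1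
      · exact ⟨(u, v), (hmemE _).mpr ⟨h1, h⟩, rfl⟩
      · exact absurd h1 h.ne
      · exact ⟨(v, u), (hmemE _).mpr ⟨h1, h.symm⟩, Sym2.eq_swap⟩
  refine ⟨E, ⟨fun p hp => ((hmemE p).mp hp).1, hcond2, hcard⟩, ⟨?_⟩⟩
  rw [hEq]
  exact ⟨e, fun {a b} => by rw [hadj]; simp⟩

theorem dir2 {n : ℕ} :
    (∀ E : Finset (Fin n × Fin n), BipartiteConds E → (HstarGraph E).IsTree →
      (¬ ∀ v : Fin n, ((HstarGraph E).neighborSet v).ncard ≤ 2) →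
      ∃ e : Fin n ≃ Fin n, ∀ l : List (Fin n),
        IsAdmissible ((HstarGraph E).map e.toEmbedding) l → l.length ≤ 3) := by
  intro E hE hTree _
  classical
  refine ⟨Equiv.refl _, ?_⟩
  have hMapEq : (HstarGraph E).map (Equiv.refl (Fin n)).toEmbedding = HstarGraph E := by
    ext u v
    rw [SimpleGraph.map_adj]
    constructor
    · rintro ⟨a, b, h, rfl, rfl⟩; simpa using h
    · intro h; exact ⟨u, v, h, by simp, by simp⟩
  rw [hMapEq]
  intro l hadm
  by_contra hlen
  push_neg at hlen
  obtain ⟨i, j, hij, hhead, hlast, ⟨hchain, hnodup⟩, hint, -⟩ := hadm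
  set G := HstarGraph E with hG
  have hEadj : ∀ p ∈ E, G.Adj p.1 p.2 := by
    intro p hp
    rw [hG, HstarGraph, SimpleGraph.fromEdgeSet_adj]
    refine ⟨?_, (hE.1 p hp).ne⟩
    simp only [Finset.coe_image, Set.mem_image, Finset.mem_coe]
    exact ⟨p, hp, rfl⟩
  rcases l with _ | ⟨a, _ | ⟨b, _ | ⟨c, _ | ⟨d, rest⟩⟩⟩⟩
  · simp at hhead
  · simp at hlen
  · simp at hlen
  · simp at hlen
  -- l = a :: b :: c :: d :: rest, with a = i
  have ha : a = i := by simpa using hhead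
  subst ha
  -- now the head variable is named `a` (i was substituted); rename facts accordingly
  -- basic facts
  have hja : (a : ℕ) < (j : ℕ) := Fin.lt_def.mp hij
  have hlast' : (c :: d :: rest).getLast? = some j := by
    rw [List.getLast?_cons_cons, List.getLast?_cons_cons] at hlast
    exact hlast
  have h1 := List.nodup_cons.mp hnodup
  have h2 := List.nodup_cons.mp h1.2
  have hab : a ≠ b := fun h => h1.1 (by simp [h])
  have hac : a ≠ c := fun h => h1.1 (by simp [h])
  have hbnin : b ∉ c :: d :: rest := h2.1
  have hbmem : b ∈ (a :: b :: c :: d :: rest).tail.dropLast := by simp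
  have hcmem : c ∈ (a :: b :: c :: d :: rest).tail.dropLast := by simp
  have hbint := hint b hbmem
  have hcint := hint c hcmem
  have hbv : (b : ℕ) < a ∨ (j : ℕ) < b := by
    rcases hbint with h | h
    · exact Or.inl (Fin.lt_def.mp h)
    · exact Or.inr (Fin.lt_def.mp h)
  have hcv : (c : ℕ) < a ∨ (j : ℕ) < c := by
    rcases hcint with h | h
    · exact Or.inl (Fin.lt_def.mp h)
    · exact Or.inr (Fin.lt_def.mp h)
  -- chain facts
  rw [show @List.Chain' = @List.IsChain from rfl, List.isChain_cons_cons] at hchain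
  obtain ⟨hch1, hchain⟩ := hchain
  rw [List.isChain_cons_cons] at hchain
  obtain ⟨hch2, hch3⟩ := hchain
  -- the deleted-edge graph
  set G' : SimpleGraph (Fin n) := G \ SimpleGraph.fromEdgeSet {s(b, c)} with hG'
  have hbridge : ¬ G'.Reachable b c := by
    have hBr := SimpleGraph.isAcyclic_iff_forall_adj_isBridge.mp hTree.IsAcyclic hch2
    rw [SimpleGraph.isBridge_iff] at hBr
    exact hBr
  have hsymne : ∀ x y : Fin n, (x ≠ b ∧ x ≠ c) ∨ (y ≠ b ∧ y ≠ c) → s(x, y) ≠ s(b, c) := by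
    intro x y h hEqs
    rw [Sym2.eq_iff] at hEqs
    tauto
  have hsymne' : ∀ x y : Fin n, x ≠ b → y ≠ b → s(x, y) ≠ s(b, c) := by
    intro x y h1' h2' hEqs
    rw [Sym2.eq_iff] at hEqs
    tauto
  have hG'adj : ∀ x y : Fin n, G.Adj x y → s(x, y) ≠ s(b, c) → G'.Adj x y := by
    intro x y h hne
    rw [hG', SimpleGraph.sdiff_adj]
    refine ⟨h, ?_⟩
    rw [SimpleGraph.fromEdgeSet_adj]
    rintro ⟨hmem, -⟩
    exact hne (by simpa using hmem)
  have hRab : G'.Adj a b := hG'adj a b hch1 (hsymne _ _ (Or.inl ⟨hab, hac⟩))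
  have hRcj : G'.Reachable c j := by
    refine reachable_of_chain (c :: d :: rest) c j ?_ rfl hlast'
    refine chain'_transfer _ hch3 ?_
    intro x hx y hy h
    exact hG'adj x y h (hsymne' x y (fun hh => hbnin (hh ▸ hx)) (fun hh => hbnin (hh ▸ hy)))
  have hNR : ¬ G'.Reachable a j := by
    intro h
    exact hbridge ((hRab.symm.reachable).trans (h.trans hRcj.symm))
  -- stepping argument
  have key : ∃ k : ℕ, (a : ℕ) ≤ k ∧ k < (j : ℕ) ∧
      (∀ (hk : k < n), G'.Reachable a ⟨k, hk⟩) ∧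
      ¬ (∀ (hk : k + 1 < n), G'.Reachable a ⟨k + 1, hk⟩) := by
    by_contra hno
    have hno' : ∀ k : ℕ, (a : ℕ) ≤ k → k < (j : ℕ) →
        (∀ (hk : k < n), G'.Reachable a ⟨k, hk⟩) →
        (∀ (hk : k + 1 < n), G'.Reachable a ⟨k + 1, hk⟩) := by
      intro k h1' h2' h3'
      by_contra h4'
      exact hno ⟨k, h1', h2', h3', h4'⟩
    have hstep : ∀ d : ℕ, (a : ℕ) + d ≤ (j : ℕ) →
        ∀ (hk : (a : ℕ) + d < n), G'.Reachable a ⟨(a : ℕ) + d, hk⟩ := by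
      intro d
      induction d with
      | zero =>
        intro _ hk
        have : (⟨(a : ℕ) + 0, hk⟩ : Fin n) = a := by ext; simp
        rw [this]
      | succ d ih =>
        intro hle
        have hle' : (a : ℕ) + d ≤ (j : ℕ) := by omega
        intro hk
        have := hno' ((a : ℕ) + d) (by omega) (by omega) (ih (by omega)) (by omega)
        have heq : (⟨(a : ℕ) + d + 1, by omega⟩ : Fin n) = ⟨(a : ℕ) + (d + 1), hk⟩ := by
          ext; simp; omega
        rwa [heq] at this
    apply hNR
    have := hstep ((j : ℕ) - (a : ℕ)) (by omega) (by omega)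
    have heq : (⟨(a : ℕ) + ((j : ℕ) - (a : ℕ)), by omega⟩ : Fin n) = j := by
      ext; simp; omega
    rwa [heq] at this
  obtain ⟨k, hak, hkj, hfk, hnfk1⟩ := key
  have hkn : k < n := lt_trans hkj j.isLt
  have hk1n : k + 1 < n := Nat.lt_of_le_of_lt (Nat.succ_le_of_lt hkj) j.isLt
  set K : Fin n := ⟨k, hkn⟩ with hK
  set K1 : Fin n := ⟨k + 1, hk1n⟩ with hK1
  have hRaK : G'.Reachable a K := hfk hkn
  have hnRaK1 : ¬ G'.Reachable a K1 := fun h => hnfk1 (fun _ => h)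

  -- K, K1 are distinct from b and c
  have hKb : K ≠ b := fun h => by
    have := congrArg Fin.val h; simp [hK] at this; omega
  have hKc : K ≠ c := fun h => by
    have := congrArg Fin.val h; simp [hK] at this; omega
  have hK1b : K1 ≠ b := fun h => by
    have := congrArg Fin.val h; simp [hK1] at this; omega
  have hK1c : K1 ≠ c := fun h => by
    have := congrArg Fin.val h; simp [hK1] at this; omega
  -- apply condition (2) to K, K1
  have hRKK1 : G'.Reachable K K1 := by
    rcases hE.2.1 K K1 rfl with hm | ⟨kk, hkk, hm1, hm2⟩ | ⟨kk, hkk, hm1, hm2⟩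
    · exact (hG'adj K K1 (hEadj _ hm) (hsymne _ _ (Or.inl ⟨hKb, hKc⟩))).reachable
    · have e1 := hG'adj K kk (hEadj _ hm1) (hsymne _ _ (Or.inl ⟨hKb, hKc⟩))
      have e2 := hG'adj K1 kk (hEadj _ hm2) (hsymne _ _ (Or.inl ⟨hK1b, hK1c⟩))
      exact e1.reachable.trans e2.symm.reachable
    · have e1 := hG'adj kk K (hEadj _ hm1) (hsymne _ _ (Or.inr ⟨hKb, hKc⟩))
      have e2 := hG'adj kk K1 (hEadj _ hm2) (hsymne _ _ (Or.inr ⟨hK1b, hK1c⟩))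
      exact e1.symm.reachable.trans e2.reachable
  exact hnRaK1 (hRaK.trans hRKK1)

/-- A tree on `{1,…,n}` which is not a path and is 3-closed is isomorphic to
`H_*` for some bipartite graph `H` satisfying the conditions above; and
conversely, if `H` satisfies the conditions and `H_*` is a tree which is not
a path, then `H_*` admits a labeling in which every admissible path has at
most 3 vertices. -/
theorem three_closed_tree_iff_bipartite {n : ℕ} :
    (∀ T : SimpleGraph (Fin n), T.IsTree →
      (¬ ∀ v : Fin n, (T.neighborSet v).ncard ≤ 2) →
      ((∃ e : Fin n ≃ Fin n, ∀ l : List (Fin n),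
          IsAdmissible (T.map e.toEmbedding) l → l.length ≤ 3) ∧
       (∀ e : Fin n ≃ Fin n, ∃ l : List (Fin n),
          IsAdmissible (T.map e.toEmbedding) l ∧ l.length = 3)) →
      ∃ E : Finset (Fin n × Fin n), BipartiteConds E ∧ Nonempty (T ≃g HstarGraph E)) ∧
    (∀ E : Finset (Fin n × Fin n), BipartiteConds E → (HstarGraph E).IsTree →
      (¬ ∀ v : Fin n, ((HstarGraph E).neighborSet v).ncard ≤ 2) →
      ∃ e : Fin n ≃ Fin n, ∀ l : List (Fin n),
        IsAdmissible ((HstarGraph E).map e.toEmbedding) l → l.length ≤ 3) := by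
  exact ⟨dir1, dir2⟩
end
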